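/- arXiv:1001.1948 — 5 statements merged into one kernel-verified Lean document; each statement's English description precedes it below -/
import Mathlib

section
/- (Theorem 2, algebraic core) Collisions acknowledged one-sender-at-a-time form a triangular, hence full-rank, system: let F be a field, n a natural number, v : Fin n → (Fin n → F) a family of vectors (the n received collisions, coordinates indexed by senders), and a : Fin n → Fin n (a(t) is the sender acknowledged upon the t-th reception). Assume (i) for every t, v t (a t) ≠ 0 (the ACKed sender is involved in the t-th collision), and (ii) for all s and t with t < s, v s (a t) = 0 (an acknowledged sender never transmits again). Then a is injective, the family v is linearly independent over F, and v spans F^n; in particular all n unknown packets can be recovered from the n receptions. -/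
/-- **Theorem 2, algebraic core.** Collisions acknowledged one-sender-at-a-time form a
triangular, hence full-rank, system. Let `F` be a field, `v : Fin n → (Fin n → F)` the `n`
received collisions (coordinates indexed by senders), and `a t` the sender acknowledged
upon the `t`-th reception. If (i) the ACKed sender is involved in the `t`-th collision
(`v t (a t) ≠ 0`) and (ii) an acknowledged sender never transmits again
(`t < s → v s (a t) = 0`), then `a` is injective, the family `v` is linearly independent
over `F`, and `v` spans `Fⁿ`. -/
theorem collisions_full_rank (F : Type*) [Field F] (n : ℕ)
    (v : Fin n → Fin n → F) (a : Fin n → Fin n)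
    (h_involved : ∀ t : Fin n, v t (a t) ≠ 0)
    (h_never_again : ∀ s t : Fin n, t < s → v s (a t) = 0) :
    Function.Injective a ∧ LinearIndependent F v ∧
      Submodule.span F (Set.range v) = ⊤ := by
  have hinj : Function.Injective a := by
    intro s t h
    by_contra hne
    rcases lt_or_gt_of_ne hne with hlt | hlt
    · exact h_involved t (h ▸ h_never_again t s hlt)
    · exact h_involved s (h ▸ h_never_again s t hlt)
  have hli : LinearIndependent F v := by
    rw [Fintype.linearIndependent_iff]
    intro c hc
    suffices h : ∀ m : ℕ, ∀ i : Fin n, (i : ℕ) < m → c i = 0 by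
      intro i; exact h (i + 1) i (Nat.lt_succ_self _)
    intro m
    induction m with
    | zero => omega
    | succ m IH =>
      intro i hi
      have ih : ∀ j : Fin n, j < i → c j = 0 := fun j hj =>
        IH j (lt_of_lt_of_le hj (Nat.lt_succ_iff.mp hi))
      have h0 := congrFun hc (a i)
      rw [Finset.sum_apply] at h0
      have hsingle : ∀ j ∈ Finset.univ, j ≠ i → (c j • v j) (a i) = 0 := by
        intro j _ hj
        rcases lt_or_gt_of_ne hj with hlt | hlt
        · simp [ih j hlt]
        · simp [h_never_again j i hlt]
      rw [Finset.sum_eq_single i hsingle (by simp)] at h0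
      simp only [Pi.smul_apply, smul_eq_mul, Pi.zero_apply] at h0
      exact (mul_eq_zero.mp h0).resolve_right (h_involved i)
  refine ⟨hinj, hli, hli.span_eq_top_of_card_eq_finrank' (by simp)⟩
end

section
/- (Gap lemma for Theorem 3) In the ZigZag model with n senders and erasure probability p ∈ (0,1), the inter-acknowledgment times X_k = T_k − T_{k−1}, k = 1, …, n, are mutually independent, and X_k is geometrically distributed on {1, 2, …} with success probability 1 − p^{n−k+1}: P(X_k = m) = (p^{n−k+1})^{m−1} (1 − p^{n−k+1}) for every integer m ≥ 1. -/
open MeasureTheory ProbabilityTheory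

/-- The ZigZag acknowledgment process. `zigzagStep n e ω k = (T_k, U_k)` where `T_0 = 0`,
`U_0 = {1,…,n}` (all senders unacknowledged), and for `k ≥ 0`:
`T_{k+1} = inf { t > T_k : ∃ i ∈ U_k, e i t ω = 0 }` (the next slot in which some
unacknowledged sender's link is not erased), and `U_{k+1}` is `U_k` minus the
smallest-index sender `i ∈ U_k` with `e i T_{k+1} ω = 0` (that sender is acknowledged and
never transmits again). -/
noncomputable def zigzagStep {Ω : Type*} (n : ℕ) (e : Fin n → ℕ → Ω → Bool) (ω : Ω) :
    ℕ → ℕ × Finset (Fin n)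
  | 0 => (0, Finset.univ)
  | k + 1 =>
    let prev := zigzagStep n e ω k
    let t := sInf {t : ℕ | prev.1 < t ∧
      (prev.2.filter (fun i => e i t ω = false)).Nonempty}
    (t, prev.2 \ prev.2.filter (fun i =>
      e i t ω = false ∧ ∀ j ∈ prev.2, e j t ω = false → i ≤ j))

namespace ZZaux

variable {Ω : Type*} (n : ℕ) (e : Fin n → ℕ → Ω → Bool)

/-- the event that the first `k` steps are proper and end in state `(t, U)` -/
def Hset (k t : ℕ) (U : Finset (Fin n)) : Set Ω :=
  {ω | zigzagStep n e ω k = (t, U) ∧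
    ∀ j, j < k → (zigzagStep n e ω j).1 < (zigzagStep n e ω (j + 1)).1}

/-- the gap variables -/
noncomputable def Xg (j : ℕ) : Ω → ℕ := fun ω => (zigzagStep n e ω (j + 1)).1 - (zigzagStep n e ω j).1

/-- all links of `U` erased during `(a, b]` -/
def AllE (U : Finset (Fin n)) (a b : ℕ) : Set Ω :=
  {ω | ∀ s, a < s → s ≤ b → ∀ j ∈ U, e j s ω = true}

/-- all links of `U` erased forever after `a` -/
def Dset (U : Finset (Fin n)) (a : ℕ) : Set Ω :=
  {ω | ∀ s, a < s → ∀ j ∈ U, e j s ω = true}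

/-- erased on `(t, t+m-1]`, not all erased at `t+m` -/
def Wset (U : Finset (Fin n)) (t m : ℕ) : Set Ω :=
  AllE n e U t (t + m - 1) \ AllE n e U t (t + m)

variable {n e}

lemma zz_succ (ω : Ω) (k : ℕ) :
    zigzagStep n e ω (k + 1) =
      ((sInf {s : ℕ | (zigzagStep n e ω k).1 < s ∧
          ((zigzagStep n e ω k).2.filter (fun i => e i s ω = false)).Nonempty}),
        (zigzagStep n e ω k).2 \ (zigzagStep n e ω k).2.filter (fun i =>
          e i (sInf {s : ℕ | (zigzagStep n e ω k).1 < s ∧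
            ((zigzagStep n e ω k).2.filter (fun i => e i s ω = false)).Nonempty}) ω = false ∧
          ∀ j ∈ (zigzagStep n e ω k).2,
            e j (sInf {s : ℕ | (zigzagStep n e ω k).1 < s ∧
              ((zigzagStep n e ω k).2.filter (fun i => e i s ω = false)).Nonempty}) ω = false
            → i ≤ j)) := rfl

lemma step_eq {ω : Ω} {k t t' : ℕ} {U : Finset (Fin n)} {i : Fin n}
    (hzz : zigzagStep n e ω k = (t, U)) (htt' : t < t') (hi : i ∈ U)
    (h1 : ∀ s, t < s → s < t' → ∀ j ∈ U, e j s ω = true)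
    (h2 : e i t' ω = false)
    (h3 : ∀ j ∈ U, j < i → e j t' ω = true) :
    zigzagStep n e ω (k + 1) = (t', U.erase i) := by
  have hS : sInf {s : ℕ | t < s ∧ (U.filter (fun i => e i s ω = false)).Nonempty} = t' := by
    apply le_antisymm
    · exact Nat.sInf_le ⟨htt', ⟨i, Finset.mem_filter.2 ⟨hi, h2⟩⟩⟩
    · have hne : {s : ℕ | t < s ∧ (U.filter (fun i => e i s ω = false)).Nonempty}.Nonempty :=
        ⟨t', htt', i, Finset.mem_filter.2 ⟨hi, h2⟩⟩
      apply le_csInf hne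
      rintro s ⟨hts, j, hj⟩
      by_contra h
      push_neg at h
      rw [Finset.mem_filter] at hj
      rw [h1 s hts h j hj.1] at hj
      exact Bool.true_eq_false.mp hj.2
  have hfil : U.filter (fun i' => e i' t' ω = false ∧ ∀ j ∈ U, e j t' ω = false → i' ≤ j)
      = {i} := by
    ext j
    simp only [Finset.mem_filter, Finset.mem_singleton]
    constructor
    · rintro ⟨hjU, hjf, hjmin⟩
      have h1' : i ≤ j := by
        by_contra hc
        push_neg at hc
        rw [h3 j hjU hc] at hjf
        exact Bool.true_eq_false.mp hjf
      exact le_antisymm (hjmin i hi h2) h1' |>.symm ▸ rfl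
    · rintro rfl
      refine ⟨hi, h2, fun j hjU hjf => ?_⟩
      by_contra hc
      push_neg at hc
      rw [h3 j hjU hc] at hjf
      exact Bool.true_eq_false.mp hjf
  rw [zz_succ, hzz]
  simp only
  rw [hS, hfil, Finset.sdiff_singleton_eq_erase]

lemma step_inv {ω : Ω} {k t : ℕ} {U : Finset (Fin n)}
    (hzz : zigzagStep n e ω k = (t, U)) (ht' : t < (zigzagStep n e ω (k + 1)).1) :
    ∃ i ∈ U,
      zigzagStep n e ω (k + 1) = ((zigzagStep n e ω (k + 1)).1, U.erase i) ∧
      (∀ s, t < s → s < (zigzagStep n e ω (k + 1)).1 → ∀ j ∈ U, e j s ω = true) ∧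
      e i (zigzagStep n e ω (k + 1)).1 ω = false ∧
      (∀ j ∈ U, j < i → e j (zigzagStep n e ω (k + 1)).1 ω = true) := by
  set t' := (zigzagStep n e ω (k + 1)).1 with ht'def
  have hfst : t' = sInf {s : ℕ | t < s ∧ (U.filter (fun i => e i s ω = false)).Nonempty} := by
    rw [ht'def, zz_succ, hzz]
  have hSne : {s : ℕ | t < s ∧ (U.filter (fun i => e i s ω = false)).Nonempty}.Nonempty := by
    by_contra h
    rw [Set.not_nonempty_iff_eq_empty] at h
    rw [h, Nat.sInf_empty] at hfst
    omega
  have hmem : t' ∈ {s : ℕ | t < s ∧ (U.filter (fun i => e i s ω = false)).Nonempty} := by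
    rw [hfst]; exact Nat.sInf_mem hSne
  obtain ⟨-, hΦ⟩ := hmem
  set Φ := U.filter (fun i => e i t' ω = false) with hΦdef
  have hiΦ : Φ.min' hΦ ∈ Φ := Φ.min'_mem hΦ
  rw [Finset.mem_filter] at hiΦ
  have h1 : ∀ s, t < s → s < t' → ∀ j ∈ U, e j s ω = true := by
    intro s hts hst' j hjU
    have hs : s ∉ {s : ℕ | t < s ∧ (U.filter (fun i => e i s ω = false)).Nonempty} := by
      intro hs
      exact absurd (Nat.sInf_le hs) (by omega)
    simp only [Set.mem_setOf_eq, not_and] at hs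
    have := hs hts
    rw [Finset.not_nonempty_iff_eq_empty, Finset.filter_eq_empty_iff] at this
    have := this hjU
    revert this
    cases e j s ω <;> simp
  have h3 : ∀ j ∈ U, j < Φ.min' hΦ → e j t' ω = true := by
    intro j hjU hj
    by_contra hc
    have : j ∈ Φ := Finset.mem_filter.2 ⟨hjU, by revert hc; cases e j t' ω <;> simp⟩
    exact absurd (Φ.min'_le j this) (by omega)
  refine ⟨Φ.min' hΦ, hiΦ.1, ?_, h1, hiΦ.2, h3⟩
  exact step_eq hzz ht' hiΦ.1 h1 hiΦ.2 h3

lemma Hcover {ω : Ω} {k t : ℕ} {U : Finset (Fin n)} (hω : ω ∈ Hset n e k t U) :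
    ω ∈ Dset n e U t ∨
      ∃ m, 1 ≤ m ∧ ∃ i ∈ U, ω ∈ Hset n e (k + 1) (t + m) (U.erase i) := by
  obtain ⟨hzz, hprop⟩ := hω
  by_cases hlt : t < (zigzagStep n e ω (k + 1)).1
  · right
    obtain ⟨i, hiU, heq, -⟩ := step_inv hzz hlt
    refine ⟨(zigzagStep n e ω (k + 1)).1 - t, by omega, i, hiU, ?_, ?_⟩
    · rw [heq]
      congr 1
      omega
    · intro j hj
      rcases Nat.lt_succ_iff_lt_or_eq.mp hj with h | rfl
      · exact hprop j h
      · rw [hzz]; exact hlt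
  · left
    intro s hs j hjU
    have hfst : (zigzagStep n e ω (k + 1)).1
        = sInf {s : ℕ | t < s ∧ (U.filter (fun i => e i s ω = false)).Nonempty} := by
      rw [zz_succ, hzz]
    have hSem : {s : ℕ | t < s ∧ (U.filter (fun i => e i s ω = false)).Nonempty} = ∅ := by
      by_contra h
      rw [← Ne, ← Set.nonempty_iff_ne_empty] at h
      have := Nat.sInf_mem h
      rw [← hfst] at this
      exact absurd this.1 (by omega)
    have hns : s ∉ {s : ℕ | t < s ∧ (U.filter (fun i => e i s ω = false)).Nonempty} := by
      rw [hSem]; exact Set.notMem_empty s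
    simp only [Set.mem_setOf_eq, not_and] at hns
    have := hns hs
    rw [Finset.not_nonempty_iff_eq_empty, Finset.filter_eq_empty_iff] at this
    have := this hjU
    revert this
    cases e j s ω <;> simp

lemma Hstep {ω : Ω} {k t m : ℕ} {U : Finset (Fin n)} (hω : ω ∈ Hset n e k t U)
    (hm : 1 ≤ m) :
    Xg n e k ω = m ↔ ∃ i ∈ U, ω ∈ Hset n e (k + 1) (t + m) (U.erase i) := by
  obtain ⟨hzz, hprop⟩ := hω
  constructor
  · intro hX
    have hXeq : (zigzagStep n e ω (k + 1)).1 - t = m := by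
      rw [Xg, hzz] at hX; exact hX
    have hlt : t < (zigzagStep n e ω (k + 1)).1 := by omega
    obtain ⟨i, hiU, heq, -⟩ := step_inv hzz hlt
    refine ⟨i, hiU, ?_, ?_⟩
    · rw [heq]; congr 1; omega
    · intro j hj
      rcases Nat.lt_succ_iff_lt_or_eq.mp hj with h | rfl
      · exact hprop j h
      · rw [hzz]; exact hlt
  · rintro ⟨i, hiU, hH, -⟩
    rw [Xg, hH, hzz]
    simp

lemma HW {ω : Ω} {k t m : ℕ} {U : Finset (Fin n)} (hω : ω ∈ Hset n e k t U)
    (hm : 1 ≤ m) :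
    ω ∈ Wset n e U t m ↔ ∃ i ∈ U, ω ∈ Hset n e (k + 1) (t + m) (U.erase i) := by
  obtain ⟨hzz, hprop⟩ := hω
  constructor
  · rintro ⟨hall, hnot⟩
    have hΦ : (U.filter (fun i => e i (t + m) ω = false)).Nonempty := by
      by_contra h
      apply hnot
      intro s hts hsb j hjU
      rcases Nat.lt_or_ge s (t + m) with hlt | hge
      · exact hall s hts (by omega) j hjU
      · have hs : s = t + m := by omega
        rw [hs]
        rw [Finset.not_nonempty_iff_eq_empty, Finset.filter_eq_empty_iff] at h
        have := h hjU
        revert this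
        cases e j (t + m) ω <;> simp
    set Φ := U.filter (fun i => e i (t + m) ω = false) with hΦdef
    have hiΦ : Φ.min' hΦ ∈ Φ := Φ.min'_mem hΦ
    rw [Finset.mem_filter] at hiΦ
    have heq : zigzagStep n e ω (k + 1) = (t + m, U.erase (Φ.min' hΦ)) := by
      apply step_eq hzz (by omega) hiΦ.1
      · intro s hts hst j hjU
        exact hall s hts (by omega) j hjU
      · exact hiΦ.2
      · intro j hjU hj
        by_contra hc
        have : j ∈ Φ := Finset.mem_filter.2 ⟨hjU, by revert hc; cases e j (t + m) ω <;> simp⟩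
        exact absurd (Φ.min'_le j this) (by omega)
    refine ⟨Φ.min' hΦ, hiΦ.1, heq, ?_⟩
    intro j hj
    rcases Nat.lt_succ_iff_lt_or_eq.mp hj with h | rfl
    · exact hprop j h
    · rw [hzz, heq]; omega
  · rintro ⟨i, hiU, hH, -⟩
    have hlt : t < (zigzagStep n e ω (k + 1)).1 := by rw [hH]; simp; omega
    obtain ⟨i', hi'U, heq', hall, hf, -⟩ := step_inv hzz hlt
    have hfst : (zigzagStep n e ω (k + 1)).1 = t + m := by rw [hH]
    constructor
    · intro s hts hsb j hjU
      exact hall s hts (by omega) j hjU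
    · intro hAll
      have := hAll (t + m) (by omega) le_rfl i' hi'U
      rw [hfst] at hf
      rw [this] at hf
      exact Bool.true_eq_false.mp hf

lemma card_of_proper {ω : Ω} :
    ∀ k, (∀ j, j < k → (zigzagStep n e ω j).1 < (zigzagStep n e ω (j + 1)).1) →
      (zigzagStep n e ω k).2.card = n - k := by
  intro k
  induction k with
  | zero => intro _; simp [zigzagStep]
  | succ k ih =>
    intro hp
    have hk := ih (fun j hj => hp j (by omega))
    have hzz : zigzagStep n e ω k = ((zigzagStep n e ω k).1, (zigzagStep n e ω k).2) := rfl
    obtain ⟨i, hiU, heq, -⟩ := step_inv hzz (hp k (by omega))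
    rw [heq]
    simp only
    rw [Finset.card_erase_of_mem hiU, hk]
    have : (zigzagStep n e ω k).2.Nonempty := ⟨i, hiU⟩
    have := Finset.card_pos.mpr this
    omega


variable (n e) in
/-- the one-step transition event -/
def Gev (U : Finset (Fin n)) (t t' : ℕ) (i : Fin n) : Set Ω :=
  {ω | (∀ s, t < s → s < t' → ∀ j ∈ U, e j s ω = true) ∧ e i t' ω = false ∧
    ∀ j ∈ U, j < i → e j t' ω = true}

lemma Hset_succ (k t' : ℕ) (U' : Finset (Fin n)) :
    Hset n e (k + 1) t' U' = ⋃ (t : ℕ) (_ : t < t') (U : Finset (Fin n)) (i : Fin n)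
      (_ : i ∈ U) (_ : U.erase i = U'), Hset n e k t U ∩ Gev n e U t t' i := by
  ext ω
  simp only [Set.mem_iUnion, Set.mem_inter_iff]
  constructor
  · rintro ⟨hzz, hprop⟩
    have hzzk : zigzagStep n e ω k = ((zigzagStep n e ω k).1, (zigzagStep n e ω k).2) := rfl
    have hlt : (zigzagStep n e ω k).1 < (zigzagStep n e ω (k + 1)).1 := hprop k (by omega)
    obtain ⟨i, hiU, heq, hall, hf, hmin⟩ := step_inv hzzk hlt
    have hfst : (zigzagStep n e ω (k + 1)).1 = t' := by rw [hzz]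
    have hU' : (zigzagStep n e ω k).2.erase i = U' := by
      rw [hzz] at heq
      exact ((Prod.mk.injEq _ _ _ _).mp heq.symm).2
    rw [hfst] at hall hf hmin hlt
    exact ⟨(zigzagStep n e ω k).1, hlt, (zigzagStep n e ω k).2, i, hiU, hU',
      ⟨⟨rfl, fun j hj => hprop j (by omega)⟩, hall, hf, hmin⟩⟩
  · rintro ⟨t, hlt, U, i, hiU, hUe, ⟨hzzk, hprop⟩, hG1, hG2, hG3⟩
    have heq := step_eq hzzk hlt hiU hG1 hG2 hG3
    refine ⟨by rw [heq, hUe], ?_⟩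
    intro j hj
    rcases Nat.lt_succ_iff_lt_or_eq.mp hj with h | rfl
    · exact hprop j h
    · rw [hzzk, heq]; exact hlt

section Filtration

variable (n e)

/-- coordinate sigma-algebra -/
def coordA (q : Fin n × ℕ) : MeasurableSpace Ω :=
  MeasurableSpace.comap (fun ω => e q.1 (q.2 + 1) ω) inferInstance

/-- past filtration: information from times `1, ..., t` -/
def Ft (t : ℕ) : MeasurableSpace Ω :=
  ⨆ q ∈ {q : Fin n × ℕ | q.2 + 1 ≤ t}, coordA n e q

/-- future: information from times `> t` -/
def Gt (t : ℕ) : MeasurableSpace Ω :=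
  ⨆ q ∈ {q : Fin n × ℕ | q.2 + 1 ≤ t}ᶜ, coordA n e q

variable {n e}

lemma coordA_meas {q : Fin n × ℕ} {b : Bool} :
    MeasurableSet[coordA n e q] {ω | e q.1 (q.2 + 1) ω = b} :=
  ⟨{b}, trivial, by ext ω; simp [Set.mem_preimage]⟩

lemma coord_Ft {j : Fin n} {s t : ℕ} (b : Bool) (h1 : 1 ≤ s) (h2 : s ≤ t) :
    MeasurableSet[Ft n e t] {ω | e j s ω = b} := by
  have hq : ((j, s - 1) : Fin n × ℕ) ∈ {q : Fin n × ℕ | q.2 + 1 ≤ t} := by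
    simp only [Set.mem_setOf_eq]; omega
  have hle : coordA n e (j, s - 1) ≤ Ft n e t := le_biSup _ hq
  have h := coordA_meas (n := n) (e := e) (q := (j, s - 1)) (b := b)
  rw [show s - 1 + 1 = s by omega] at h
  exact hle _ h

lemma coord_Gt {j : Fin n} {s t : ℕ} (b : Bool) (h2 : t < s) :
    MeasurableSet[Gt n e t] {ω | e j s ω = b} := by
  have hq : ((j, s - 1) : Fin n × ℕ) ∈ {q : Fin n × ℕ | q.2 + 1 ≤ t}ᶜ := by
    simp only [Set.mem_compl_iff, Set.mem_setOf_eq]; omega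
  have hle : coordA n e (j, s - 1) ≤ Gt n e t := le_biSup _ hq
  have h := coordA_meas (n := n) (e := e) (q := (j, s - 1)) (b := b)
  rw [show s - 1 + 1 = s by omega] at h
  exact hle _ h

lemma Ft_mono {t t' : ℕ} (h : t ≤ t') : Ft n e t ≤ Ft n e t' := by
  apply biSup_mono
  intro q hq
  exact le_trans hq h

lemma Gev_Ft {U : Finset (Fin n)} {t t' : ℕ} {i : Fin n} (htt' : t < t') :
    MeasurableSet[Ft n e t'] (Gev n e U t t' i) := by
  have : Gev n e U t t' i =
      (⋂ (s : ℕ) (_ : t < s) (_ : s < t'), ⋂ j ∈ U, {ω : Ω | e j s ω = true}) ∩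
      ({ω : Ω | e i t' ω = false} ∩
        ⋂ (j : Fin n) (_ : j ∈ U) (_ : j < i), {ω : Ω | e j t' ω = true}) := by
    ext ω
    simp only [Gev, Set.mem_inter_iff, Set.mem_iInter, Set.mem_setOf_eq]
  rw [this]
  refine MeasurableSet.inter ?_ (MeasurableSet.inter ?_ ?_)
  · refine MeasurableSet.iInter fun s => MeasurableSet.iInter fun hs =>
      MeasurableSet.iInter fun hs' => MeasurableSet.iInter fun j =>
      MeasurableSet.iInter fun _ => coord_Ft true (by omega) (by omega)
  · exact coord_Ft false (by omega) le_rfl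
  · exact MeasurableSet.iInter fun j => MeasurableSet.iInter fun _ =>
      MeasurableSet.iInter fun _ => coord_Ft true (by omega) le_rfl

lemma Hset_Ft : ∀ (k t : ℕ) (U : Finset (Fin n)), MeasurableSet[Ft n e t] (Hset n e k t U) := by
  intro k
  induction k with
  | zero =>
    intro t U
    by_cases h : ((0 : ℕ), (Finset.univ : Finset (Fin n))) = (t, U)
    · have : Hset n e 0 t U = Set.univ := by
        ext ω
        simp only [Hset, Set.mem_setOf_eq, Set.mem_univ, iff_true]
        exact ⟨by rw [← h]; rfl, fun j hj => by omega⟩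
      rw [this]; exact @MeasurableSet.univ _ (Ft n e t)
    · have : Hset n e 0 t U = ∅ := by
        ext ω
        simp only [Hset, Set.mem_setOf_eq, Set.mem_empty_iff_false, iff_false, not_and]
        intro hzz
        exact absurd (by rw [← hzz]; rfl) h
      rw [this]; exact @MeasurableSet.empty _ (Ft n e t)
  | succ k ih =>
    intro t' U'
    rw [Hset_succ]
    refine MeasurableSet.iUnion fun t => MeasurableSet.iUnion fun hlt =>
      MeasurableSet.iUnion fun U => MeasurableSet.iUnion fun i =>
      MeasurableSet.iUnion fun _ => MeasurableSet.iUnion fun _ =>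
      MeasurableSet.inter ?_ (Gev_Ft hlt)
    exact Ft_mono (le_of_lt hlt) _ (ih t U)

end Filtration


variable (n e) in
/-- the set of candidate next arrival times from state `u` -/
def Sev (u : ℕ × Finset (Fin n)) (ω : Ω) : Set ℕ :=
  {s : ℕ | u.1 < s ∧ (u.2.filter (fun i => e i s ω = false)).Nonempty}

section AmbientMeas

variable [MeasurableSpace Ω]

lemma coord_mset (hmeas : ∀ i t, Measurable (e i t)) (j : Fin n) (s : ℕ) (b : Bool) :
    MeasurableSet {ω | e j s ω = b} :=
  hmeas j s (measurableSet_singleton b)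

lemma Ft_le (hmeas : ∀ i t, Measurable (e i t)) (t : ℕ) :
    Ft n e t ≤ (inferInstance : MeasurableSpace Ω) :=
  iSup₂_le fun q _ => Measurable.comap_le (hmeas _ _)

lemma AllE_mset (hmeas : ∀ i t, Measurable (e i t)) (U : Finset (Fin n)) (a b : ℕ) :
    MeasurableSet (AllE n e U a b) := by
  have : AllE n e U a b
      = ⋂ (s : ℕ) (_ : a < s) (_ : s ≤ b), ⋂ j ∈ U, {ω : Ω | e j s ω = true} := by
    ext ω
    simp only [AllE, Set.mem_setOf_eq, Set.mem_iInter]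
  rw [this]
  exact MeasurableSet.iInter fun s => MeasurableSet.iInter fun _ =>
    MeasurableSet.iInter fun _ => MeasurableSet.iInter fun j =>
    MeasurableSet.iInter fun _ => coord_mset hmeas j s true

lemma memS_mset (hmeas : ∀ i t, Measurable (e i t)) (u : ℕ × Finset (Fin n)) (s : ℕ) :
    MeasurableSet {ω : Ω | s ∈ Sev n e u ω} := by
  by_cases h : u.1 < s
  · have : {ω : Ω | s ∈ Sev n e u ω} = ⋃ j ∈ u.2, {ω | e j s ω = false} := by
      ext ω
      simp [Sev, h, Finset.filter_nonempty_iff]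
    rw [this]
    exact MeasurableSet.biUnion u.2.countable_toSet fun j _ => coord_mset hmeas j s false
  · have : {ω : Ω | s ∈ Sev n e u ω} = ∅ := by
      ext ω; simp [Sev, h]
    rw [this]; exact MeasurableSet.empty

lemma sinf_meas (hmeas : ∀ i t, Measurable (e i t)) (u : ℕ × Finset (Fin n)) (c : ℕ) :
    MeasurableSet {ω : Ω | sInf (Sev n e u ω) = c} := by
  rcases Nat.eq_zero_or_pos c with rfl | hc
  · have : {ω : Ω | sInf (Sev n e u ω) = 0} = ⋂ (s : ℕ), {ω : Ω | s ∈ Sev n e u ω}ᶜ := by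
      ext ω
      simp only [Set.mem_iInter, Set.mem_compl_iff, Set.mem_setOf_eq]
      constructor
      · intro h0 s hs
        have hne : (Sev n e u ω).Nonempty := ⟨s, hs⟩
        have hmem := Nat.sInf_mem hne
        rw [h0] at hmem
        exact absurd hmem.1 (by omega)
      · intro h
        have hemp : Sev n e u ω = ∅ := Set.eq_empty_iff_forall_notMem.2 h
        rw [hemp, Nat.sInf_empty]
    rw [this]
    exact MeasurableSet.iInter fun s => (memS_mset hmeas u s).compl
  · have : {ω : Ω | sInf (Sev n e u ω) = c}
        = {ω : Ω | c ∈ Sev n e u ω} ∩ ⋂ (s : ℕ) (_ : s < c), {ω : Ω | s ∈ Sev n e u ω}ᶜ := by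
      ext ω
      simp only [Set.mem_inter_iff, Set.mem_iInter, Set.mem_compl_iff, Set.mem_setOf_eq]
      constructor
      · intro h0
        have hne : (Sev n e u ω).Nonempty := by
          by_contra hh
          rw [Set.not_nonempty_iff_eq_empty] at hh
          rw [hh, Nat.sInf_empty] at h0
          omega
        have hmem := Nat.sInf_mem hne
        rw [h0] at hmem
        exact ⟨hmem, fun s hs hmem' => absurd (Nat.sInf_le hmem') (by omega)⟩
      · rintro ⟨hmem, hlt⟩
        apply le_antisymm (Nat.sInf_le hmem)
        have hne : (Sev n e u ω).Nonempty := ⟨c, hmem⟩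
        by_contra hh
        push_neg at hh
        exact hlt _ hh (Nat.sInf_mem hne)
    rw [this]
    exact (memS_mset hmeas u c).inter
      (MeasurableSet.iInter fun s => MeasurableSet.iInter fun _ => (memS_mset hmeas u s).compl)

lemma zz_meas (hmeas : ∀ i t, Measurable (e i t)) :
    ∀ (k : ℕ) (v : ℕ × Finset (Fin n)), MeasurableSet {ω : Ω | zigzagStep n e ω k = v} := by
  intro k
  induction k with
  | zero =>
    intro v
    by_cases h : ((0 : ℕ), (Finset.univ : Finset (Fin n))) = v
    · have : {ω : Ω | zigzagStep n e ω 0 = v} = Set.univ := by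
        ext ω; simpa [zigzagStep] using h
      rw [this]; exact MeasurableSet.univ
    · have : {ω : Ω | zigzagStep n e ω 0 = v} = ∅ := by
        ext ω; simpa [zigzagStep] using h
      rw [this]; exact MeasurableSet.empty
  | succ k ih =>
    intro v
    have hrep : {ω : Ω | zigzagStep n e ω (k + 1) = v} =
        ⋃ (u : ℕ × Finset (Fin n)), {ω : Ω | zigzagStep n e ω k = u} ∩
          ({ω : Ω | sInf (Sev n e u ω) = v.1} ∩
            ⋃ (g : Fin n → Bool)
              (_ : u.2 \ u.2.filter
                  (fun i => g i = false ∧ ∀ j ∈ u.2, g j = false → i ≤ j) = v.2),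
              ⋂ (j : Fin n), {ω : Ω | e j v.1 ω = g j}) := by
      ext ω
      simp only [Set.mem_iUnion, Set.mem_inter_iff, Set.mem_setOf_eq, Set.mem_iInter]
      constructor
      · intro hzz
        refine ⟨zigzagStep n e ω k, rfl, ?_, ?_⟩
        · rw [← hzz]; rfl
        · have h1 : sInf (Sev n e (zigzagStep n e ω k) ω) = v.1 := by rw [← hzz]; rfl
          have h2 : (zigzagStep n e ω (k + 1)).2
              = (zigzagStep n e ω k).2 \ (zigzagStep n e ω k).2.filter
                (fun i => e i (sInf (Sev n e (zigzagStep n e ω k) ω)) ω = false ∧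
                  ∀ j ∈ (zigzagStep n e ω k).2,
                    e j (sInf (Sev n e (zigzagStep n e ω k) ω)) ω = false → i ≤ j) := rfl
          rw [h1, hzz] at h2
          refine ⟨fun j => e j v.1 ω, ?_, fun j => rfl⟩
          exact h2.symm
      · rintro ⟨u, hu, h1, g, hg, hcoord⟩
        have hfst : (zigzagStep n e ω (k + 1)).1 = v.1 := by
          have h0 : (zigzagStep n e ω (k + 1)).1
              = sInf (Sev n e (zigzagStep n e ω k) ω) := rfl
          rw [h0, hu]; exact h1
        have hsnd : (zigzagStep n e ω (k + 1)).2 = v.2 := by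
          have h2 : (zigzagStep n e ω (k + 1)).2
              = (zigzagStep n e ω k).2 \ (zigzagStep n e ω k).2.filter
                (fun i => e i (sInf (Sev n e (zigzagStep n e ω k) ω)) ω = false ∧
                  ∀ j ∈ (zigzagStep n e ω k).2,
                    e j (sInf (Sev n e (zigzagStep n e ω k) ω)) ω = false → i ≤ j) := rfl
          rw [hu, h1] at h2
          rw [h2, ← hg]
          congr 1
          apply Finset.filter_congr
          intro i _
          simp [hcoord]
        exact Prod.ext_iff.mpr ⟨hfst, hsnd⟩
    rw [hrep]
    refine MeasurableSet.iUnion fun u => (ih u).inter ((sinf_meas hmeas u v.1).inter ?_)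
    exact MeasurableSet.iUnion fun g => MeasurableSet.iUnion fun _ =>
      MeasurableSet.iInter fun j => coord_mset hmeas j v.1 (g j)

lemma zzfst_meas (hmeas : ∀ i t, Measurable (e i t)) (k : ℕ) :
    Measurable fun ω : Ω => (zigzagStep n e ω k).1 := by
  apply measurable_to_countable'
  intro c
  have : (fun ω : Ω => (zigzagStep n e ω k).1) ⁻¹' {c}
      = ⋃ (U : Finset (Fin n)), {ω : Ω | zigzagStep n e ω k = (c, U)} := by
    ext ω
    simp only [Set.mem_preimage, Set.mem_singleton_iff, Set.mem_iUnion, Set.mem_setOf_eq]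
    constructor
    · intro h
      exact ⟨(zigzagStep n e ω k).2, Prod.ext_iff.mpr ⟨h, rfl⟩⟩
    · rintro ⟨U, hU⟩
      rw [hU]
  rw [this]
  exact MeasurableSet.iUnion fun U => zz_meas hmeas k (c, U)

lemma X_mset (hmeas : ∀ i t, Measurable (e i t)) (j m : ℕ) :
    MeasurableSet {ω : Ω | Xg n e j ω = m} :=
  ((zzfst_meas hmeas (j + 1)).sub (zzfst_meas hmeas j)) (measurableSet_singleton m)

end AmbientMeas


section MeasureComp

variable [MeasurableSpace Ω] {μ : Measure Ω} [IsProbabilityMeasure μ] {p : ℝ}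

lemma past_future (hmeas : ∀ i t, Measurable (e i t))
    (hindep : iIndepFun
      (fun it : Fin n × ℕ => e it.1 (it.2 + 1)) μ)
    (t : ℕ) {A B : Set Ω} (hA : MeasurableSet[Ft n e t] A) (hB : MeasurableSet[Gt n e t] B) :
    μ (A ∩ B) = μ A * μ B := by
  have h2 : iIndep (fun q : Fin n × ℕ => coordA n e q) μ := hindep
  have h : Indep (Ft n e t) (Gt n e t) μ :=
    indep_biSup_compl (fun q => Measurable.comap_le (hmeas _ _)) h2 {q : Fin n × ℕ | q.2 + 1 ≤ t}
  exact (Indep_iff _ _ _).mp h A B hA hB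

lemma allE_prod_rep (U : Finset (Fin n)) (a b : ℕ) :
    AllE n e U a b
      = ⋂ q ∈ U ×ˢ Finset.Ico a b, (fun ω : Ω => e q.1 (q.2 + 1) ω) ⁻¹' {true} := by
  ext ω
  simp only [AllE, Set.mem_setOf_eq, Set.mem_iInter, Finset.mem_product, Finset.mem_Ico,
    Set.mem_preimage, Set.mem_singleton_iff]
  constructor
  · rintro h q ⟨hq1, hq2, hq3⟩
    exact h (q.2 + 1) (by omega) (by omega) q.1 hq1
  · intro h s hs1 hs2 j hj
    have := h (j, s - 1) ⟨hj, by omega, by omega⟩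
    simpa [show s - 1 + 1 = s by omega] using this

lemma allE_val (hp0 : 0 < p)
    (hindep : iIndepFun
      (fun it : Fin n × ℕ => e it.1 (it.2 + 1)) μ)
    (hdist : ∀ (i : Fin n) (t : ℕ), 1 ≤ t → μ {ω | e i t ω = true} = ENNReal.ofReal p)
    (U : Finset (Fin n)) (a b : ℕ) :
    μ (AllE n e U a b) = ENNReal.ofReal (p ^ (U.card * (b - a))) := by
  rw [allE_prod_rep]
  rw [hindep.measure_inter_preimage_eq_mul (U ×ˢ Finset.Ico a b)
    (fun q _ => measurableSet_singleton true)]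
  have hval : ∀ q ∈ U ×ˢ Finset.Ico a b,
      μ ((fun ω : Ω => e q.1 (q.2 + 1) ω) ⁻¹' {true}) = ENNReal.ofReal p := by
    intro q _
    exact hdist q.1 (q.2 + 1) (by omega)
  rw [Finset.prod_congr rfl hval, Finset.prod_const, Finset.card_product, Nat.card_Ico]
  rw [← ENNReal.ofReal_pow hp0.le]

lemma AllE_Gt {U : Finset (Fin n)} {t a b : ℕ} (h : t ≤ a) :
    MeasurableSet[Gt n e t] (AllE n e U a b) := by
  have : AllE n e U a b
      = ⋂ (s : ℕ) (_ : a < s) (_ : s ≤ b), ⋂ j ∈ U, {ω : Ω | e j s ω = true} := by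
    ext ω
    simp only [AllE, Set.mem_setOf_eq, Set.mem_iInter]
  rw [this]
  exact MeasurableSet.iInter fun s => MeasurableSet.iInter fun hs =>
    MeasurableSet.iInter fun _ => MeasurableSet.iInter fun j =>
    MeasurableSet.iInter fun _ => coord_Gt true (by omega)

lemma Wset_Gt {U : Finset (Fin n)} {t m : ℕ} : MeasurableSet[Gt n e t] (Wset n e U t m) :=
  (AllE_Gt le_rfl).diff (AllE_Gt le_rfl)

lemma W_val (hmeas : ∀ i t, Measurable (e i t)) (hp0 : 0 < p) (hp1 : p < 1)
    (hindep : iIndepFun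
      (fun it : Fin n × ℕ => e it.1 (it.2 + 1)) μ)
    (hdist : ∀ (i : Fin n) (t : ℕ), 1 ≤ t → μ {ω | e i t ω = true} = ENNReal.ofReal p)
    (U : Finset (Fin n)) (t m : ℕ) (hm : 1 ≤ m) :
    μ (Wset n e U t m) = ENNReal.ofReal ((p ^ U.card) ^ (m - 1) * (1 - p ^ U.card)) := by
  have hsub : AllE n e U t (t + m) ⊆ AllE n e U t (t + m - 1) :=
    fun ω h s hs1 hs2 => h s hs1 (by omega)
  rw [Wset, measure_diff hsub ((AllE_mset hmeas U t (t + m)).nullMeasurableSet)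
    (measure_ne_top μ _)]
  rw [allE_val hp0 hindep hdist, allE_val hp0 hindep hdist]
  rw [show t + m - 1 - t = m - 1 by omega, show t + m - t = m by omega]
  rw [← ENNReal.ofReal_sub _ (by positivity)]
  congr 1
  rw [pow_mul, pow_mul]
  have hstep : (p ^ U.card) ^ m = (p ^ U.card) ^ (m - 1) * p ^ U.card := by
    rw [← pow_succ]
    congr 1
    omega
  rw [hstep]
  ring

lemma Dnull (hmeas : ∀ i t, Measurable (e i t)) (hp0 : 0 < p) (hp1 : p < 1)
    (hindep : iIndepFun
      (fun it : Fin n × ℕ => e it.1 (it.2 + 1)) μ)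
    (hdist : ∀ (i : Fin n) (t : ℕ), 1 ≤ t → μ {ω | e i t ω = true} = ENNReal.ofReal p)
    {U : Finset (Fin n)} (hU : U.Nonempty) (t : ℕ) :
    μ (Dset n e U t) = 0 := by
  have hcard : U.card ≠ 0 := by
    have := Finset.card_pos.mpr hU
    omega
  have hle : ∀ N : ℕ, μ (Dset n e U t) ≤ ENNReal.ofReal ((p ^ U.card) ^ N) := by
    intro N
    have hsub : Dset n e U t ⊆ AllE n e U t (t + N) := fun ω h s hs1 _ => h s hs1
    calc μ (Dset n e U t) ≤ μ (AllE n e U t (t + N)) := measure_mono hsub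
      _ = ENNReal.ofReal (p ^ (U.card * (t + N - t))) := allE_val hp0 hindep hdist U t (t + N)
      _ = ENNReal.ofReal ((p ^ U.card) ^ N) := by
          rw [show t + N - t = N by omega, pow_mul]
  have h0 : Filter.Tendsto (fun N : ℕ => ENNReal.ofReal ((p ^ U.card) ^ N))
      Filter.atTop (nhds 0) := by
    rw [show (0 : ENNReal) = ENNReal.ofReal 0 by simp]
    exact ENNReal.tendsto_ofReal
      (tendsto_pow_atTop_nhds_zero_of_lt_one (by positivity) (pow_lt_one₀ hp0.le hp1 hcard))
  exact le_antisymm (ge_of_tendsto' h0 hle) zero_le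

lemma tsum_W (hmeas : ∀ i t, Measurable (e i t)) (hp0 : 0 < p) (hp1 : p < 1)
    (hindep : iIndepFun
      (fun it : Fin n × ℕ => e it.1 (it.2 + 1)) μ)
    (hdist : ∀ (i : Fin n) (t : ℕ), 1 ≤ t → μ {ω | e i t ω = true} = ENNReal.ofReal p)
    {U : Finset (Fin n)} (hU : U.Nonempty) (t : ℕ) :
    ∑' (m : ℕ), μ (Wset n e U t (m + 1)) = 1 := by
  have hcard : U.card ≠ 0 := by
    have := Finset.card_pos.mpr hU
    omega
  set r := p ^ U.card with hr
  have hr0 : 0 ≤ r := by positivity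
  have hr1 : r < 1 := pow_lt_one₀ hp0.le hp1 hcard
  have hW : ∀ m : ℕ, μ (Wset n e U t (m + 1)) = ENNReal.ofReal (r ^ m * (1 - r)) := by
    intro m
    rw [W_val hmeas hp0 hp1 hindep hdist U t (m + 1) (by omega)]
    norm_num
    rfl
  rw [tsum_congr hW]
  rw [← ENNReal.ofReal_tsum_of_nonneg
    (fun m => mul_nonneg (pow_nonneg hr0 m) (by linarith))
    ((summable_geometric_of_lt_one hr0 hr1).mul_right _)]
  rw [tsum_mul_right, tsum_geometric_of_lt_one hr0 hr1,
    inv_mul_cancel₀ (by linarith : (1 : ℝ) - r ≠ 0)]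
  simp

end MeasureComp


/-- geometric weight -/
noncomputable def gE (p : ℝ) (c m : ℕ) : ENNReal :=
  ENNReal.ofReal ((p ^ c) ^ (m - 1) * (1 - p ^ c))

lemma erase_ne {U : Finset (Fin n)} {i i' : Fin n} (hi' : i' ∈ U) (hne : i ≠ i') :
    U.erase i ≠ U.erase i' := by
  intro h
  have hmem : i' ∈ U.erase i := Finset.mem_erase.mpr ⟨fun hh => hne hh.symm, hi'⟩
  rw [h] at hmem
  exact (Finset.notMem_erase i' U) hmem

lemma Hset_state_ne {k t1 t2 : ℕ} {U1 U2 : Finset (Fin n)} {ω : Ω}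
    (h1 : ω ∈ Hset n e k t1 U1) (h2 : ω ∈ Hset n e k t2 U2) : t1 = t2 ∧ U1 = U2 := by
  have := h1.1.symm.trans h2.1
  exact Prod.mk.injEq _ _ _ _ ▸ (Prod.mk.injEq _ _ _ _).mp this

section KeyLemma

variable [MeasurableSpace Ω] {μ : Measure Ω} [IsProbabilityMeasure μ] {p : ℝ}

lemma key (hmeas : ∀ i t, Measurable (e i t)) (hp0 : 0 < p) (hp1 : p < 1)
    (hindep : iIndepFun
      (fun it : Fin n × ℕ => e it.1 (it.2 + 1)) μ)
    (hdist : ∀ (i : Fin n) (t : ℕ), 1 ≤ t → μ {ω | e i t ω = true} = ENNReal.ofReal p) :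
    ∀ (d k : ℕ), k + d = n → ∀ (t : ℕ) (U : Finset (Fin n)), U.card = n - k →
      ∀ (A : Set Ω), MeasurableSet[Ft n e t] A →
      ∀ (S : Finset ℕ), (∀ j ∈ S, k ≤ j ∧ j < n) →
      ∀ (m : ℕ → ℕ), (∀ j ∈ S, 1 ≤ m j) →
      μ (A ∩ Hset n e k t U ∩ ⋂ j ∈ S, {ω : Ω | Xg n e j ω = m j})
        = μ (A ∩ Hset n e k t U) * ∏ j ∈ S, gE p (n - j) (m j) := by
  intro d
  induction d with
  | zero =>
    intro k hk t U hU A hA S hS m hm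
    have hSempty : S = ∅ := by
      apply Finset.eq_empty_of_forall_notMem
      intro j hj
      have := hS j hj
      omega
    subst hSempty
    simp
  | succ d ih =>
    intro k hk t U hU A hA S hS m hm
    have hkn : k < n := by omega
    have hUne : U.Nonempty := Finset.card_pos.mp (by omega)
    set A'' := A ∩ Hset n e k t U with hA''def
    have hA''F : MeasurableSet[Ft n e t] A'' := hA.inter (Hset_Ft k t U)
    have hA''m : MeasurableSet A'' := Ft_le hmeas t _ hA''F
    have hA''sub : A'' ⊆ Hset n e k t U := Set.inter_subset_right
    by_cases hkS : k ∈ S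
    · -- the current gap is prescribed
      set m₀ := m k with hm₀def
      have hm₀ : 1 ≤ m₀ := hm k hkS
      have hdecomp : A'' ∩ ⋂ j ∈ S, {ω : Ω | Xg n e j ω = m j}
          = ⋃ i ∈ U, (A'' ∩ Hset n e (k + 1) (t + m₀) (U.erase i))
              ∩ ⋂ j ∈ S.erase k, {ω : Ω | Xg n e j ω = m j} := by
        conv_lhs => rw [← Finset.insert_erase hkS, Finset.set_biInter_insert]
        ext ω
        simp only [Set.mem_inter_iff, Set.mem_iUnion, Set.mem_setOf_eq]
        constructor
        · rintro ⟨hω, hXk, hrest⟩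
          obtain ⟨i, hiU, hHi⟩ := (Hstep (hA''sub hω) hm₀).mp hXk
          exact ⟨i, hiU, ⟨⟨hω, hHi⟩, hrest⟩⟩
        · rintro ⟨i, hiU, ⟨⟨hω, hHi⟩, hrest⟩⟩
          exact ⟨hω, (Hstep (hA''sub hω) hm₀).mpr ⟨i, hiU, hHi⟩, hrest⟩
      rw [hdecomp]
      have hdisj : (↑U : Set (Fin n)).PairwiseDisjoint
          (fun i => (A'' ∩ Hset n e (k + 1) (t + m₀) (U.erase i))
            ∩ ⋂ j ∈ S.erase k, {ω : Ω | Xg n e j ω = m j}) := by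
        intro i hi i' hi' hne
        refine Set.disjoint_left.mpr ?_
        rintro ω ⟨⟨-, hH⟩, -⟩ ⟨⟨-, hH'⟩, -⟩
        exact erase_ne (Finset.mem_coe.mp hi') hne (Hset_state_ne hH hH').2
      have hmeasI : ∀ i ∈ U, MeasurableSet
          ((A'' ∩ Hset n e (k + 1) (t + m₀) (U.erase i))
            ∩ ⋂ j ∈ S.erase k, {ω : Ω | Xg n e j ω = m j}) := by
        intro i _
        exact ((hA''m.inter (Ft_le hmeas (t + m₀) _ (Hset_Ft (k + 1) (t + m₀) (U.erase i)))).inter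
          (MeasurableSet.iInter fun j => MeasurableSet.iInter fun _ => X_mset hmeas j (m j)))
      rw [measure_biUnion_finset hdisj hmeasI]
      have hterm : ∀ i ∈ U,
          μ ((A'' ∩ Hset n e (k + 1) (t + m₀) (U.erase i))
            ∩ ⋂ j ∈ S.erase k, {ω : Ω | Xg n e j ω = m j})
          = μ (A'' ∩ Hset n e (k + 1) (t + m₀) (U.erase i))
              * ∏ j ∈ S.erase k, gE p (n - j) (m j) := by
        intro i hi
        exact ih (k + 1) (by omega) (t + m₀) (U.erase i)
          (by rw [Finset.card_erase_of_mem hi]; omega)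
          A'' (Ft_mono (by omega) _ hA''F)
          (S.erase k) (fun j hj => by
            have h1 := hS j (Finset.mem_of_mem_erase hj)
            have h2 := Finset.ne_of_mem_erase hj
            omega)
          m (fun j hj => hm j (Finset.mem_of_mem_erase hj))
      rw [Finset.sum_congr rfl hterm, ← Finset.sum_mul]
      have hdisj2 : (↑U : Set (Fin n)).PairwiseDisjoint
          (fun i => A'' ∩ Hset n e (k + 1) (t + m₀) (U.erase i)) := by
        intro i hi i' hi' hne
        refine Set.disjoint_left.mpr ?_
        rintro ω ⟨-, hH⟩ ⟨-, hH'⟩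
        exact erase_ne (Finset.mem_coe.mp hi') hne (Hset_state_ne hH hH').2
      have hmeasI2 : ∀ i ∈ U, MeasurableSet (A'' ∩ Hset n e (k + 1) (t + m₀) (U.erase i)) := by
        intro i _
        exact hA''m.inter (Ft_le hmeas (t + m₀) _ (Hset_Ft (k + 1) (t + m₀) (U.erase i)))
      have hsum : ∑ i ∈ U, μ (A'' ∩ Hset n e (k + 1) (t + m₀) (U.erase i))
          = μ A'' * gE p (n - k) m₀ := by
        rw [← measure_biUnion_finset hdisj2 hmeasI2]
        have hUW : (⋃ i ∈ U, A'' ∩ Hset n e (k + 1) (t + m₀) (U.erase i))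
            = A'' ∩ Wset n e U t m₀ := by
          ext ω
          simp only [Set.mem_iUnion, Set.mem_inter_iff]
          constructor
          · rintro ⟨i, hiU, hω, hHi⟩
            exact ⟨hω, (HW (hA''sub hω) hm₀).mpr ⟨i, hiU, hHi⟩⟩
          · rintro ⟨hω, hWm⟩
            obtain ⟨i, hiU, hHi⟩ := (HW (hA''sub hω) hm₀).mp hWm
            exact ⟨i, hiU, hω, hHi⟩
        rw [hUW, past_future hmeas hindep t hA''F Wset_Gt,
          W_val hmeas hp0 hp1 hindep hdist U t m₀ hm₀, hU]
        rfl
      rw [hsum]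
      conv_rhs => rw [← Finset.insert_erase hkS,
        Finset.prod_insert (Finset.notMem_erase k S)]
      ring
    · -- the current gap is unconstrained: integrate it out
      have hS' : ∀ j ∈ S, k + 1 ≤ j ∧ j < n := by
        intro j hj
        have h1 := hS j hj
        have h2 : j ≠ k := fun h => hkS (h ▸ hj)
        omega
      have hRm : MeasurableSet (⋂ j ∈ S, {ω : Ω | Xg n e j ω = m j}) :=
        MeasurableSet.iInter fun j => MeasurableSet.iInter fun _ => X_mset hmeas j (m j)
      have hcover : A'' ∩ ⋂ j ∈ S, {ω : Ω | Xg n e j ω = m j}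
          = (⋃ (m' : ℕ), ⋃ i ∈ U,
              (A'' ∩ Hset n e (k + 1) (t + m' + 1) (U.erase i))
                ∩ ⋂ j ∈ S, {ω : Ω | Xg n e j ω = m j})
            ∪ ((A'' ∩ Dset n e U t) ∩ ⋂ j ∈ S, {ω : Ω | Xg n e j ω = m j}) := by
        ext ω
        simp only [Set.mem_union, Set.mem_iUnion, Set.mem_inter_iff]
        constructor
        · rintro ⟨hω, hr⟩
          rcases Hcover (hA''sub hω) with hD | ⟨mm, hmm, i, hiU, hH⟩
          · exact Or.inr ⟨⟨hω, hD⟩, hr⟩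
          · refine Or.inl ⟨mm - 1, i, hiU, ⟨⟨hω, ?_⟩, hr⟩⟩
            rwa [show t + (mm - 1) + 1 = t + mm by omega]
        · rintro (⟨m', i, hiU, ⟨⟨hω, -⟩, hr⟩⟩ | ⟨⟨hω, -⟩, hr⟩) <;> exact ⟨hω, hr⟩
      rw [hcover]
      have hZ : μ ((A'' ∩ Dset n e U t) ∩ ⋂ j ∈ S, {ω : Ω | Xg n e j ω = m j}) = 0 :=
        measure_mono_null (fun ω h => h.1.2) (Dnull hmeas hp0 hp1 hindep hdist hUne t)
      have hMU : ∀ m' : ℕ, MeasurableSet (⋃ i ∈ U,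
          (A'' ∩ Hset n e (k + 1) (t + m' + 1) (U.erase i))
            ∩ ⋂ j ∈ S, {ω : Ω | Xg n e j ω = m j}) := by
        intro m'
        refine MeasurableSet.biUnion U.countable_toSet fun i _ => ?_
        exact (hA''m.inter (Ft_le hmeas (t + m' + 1) _
          (Hset_Ft (k + 1) (t + m' + 1) (U.erase i)))).inter hRm
      have hunion : μ ((⋃ (m' : ℕ), ⋃ i ∈ U,
              (A'' ∩ Hset n e (k + 1) (t + m' + 1) (U.erase i))
                ∩ ⋂ j ∈ S, {ω : Ω | Xg n e j ω = m j})
            ∪ ((A'' ∩ Dset n e U t) ∩ ⋂ j ∈ S, {ω : Ω | Xg n e j ω = m j}))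
          = μ (⋃ (m' : ℕ), ⋃ i ∈ U,
              (A'' ∩ Hset n e (k + 1) (t + m' + 1) (U.erase i))
                ∩ ⋂ j ∈ S, {ω : Ω | Xg n e j ω = m j}) := by
        apply le_antisymm
        · refine le_trans (measure_union_le _ _) ?_
          rw [hZ, add_zero]
        · exact measure_mono Set.subset_union_left
      rw [hunion]
      have hdisjm : Pairwise (Function.onFun Disjoint (fun m' : ℕ => ⋃ i ∈ U,
          (A'' ∩ Hset n e (k + 1) (t + m' + 1) (U.erase i))
            ∩ ⋂ j ∈ S, {ω : Ω | Xg n e j ω = m j})) := by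
        intro m1 m2 hne
        refine Set.disjoint_left.mpr ?_
        simp only [Set.mem_iUnion]
        rintro ω ⟨i, hiU, ⟨⟨-, hH⟩, -⟩⟩ ⟨i', hi'U, ⟨⟨-, hH'⟩, -⟩⟩
        have := (Hset_state_ne hH hH').1
        omega
      rw [measure_iUnion hdisjm hMU]
      have hdisj2 : ∀ m' : ℕ, (↑U : Set (Fin n)).PairwiseDisjoint
          (fun i => (A'' ∩ Hset n e (k + 1) (t + m' + 1) (U.erase i))
            ∩ ⋂ j ∈ S, {ω : Ω | Xg n e j ω = m j}) := by
        intro m' i hi i' hi' hne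
        refine Set.disjoint_left.mpr ?_
        rintro ω ⟨⟨-, hH⟩, -⟩ ⟨⟨-, hH'⟩, -⟩
        exact erase_ne (Finset.mem_coe.mp hi') hne (Hset_state_ne hH hH').2
      have hterm : ∀ m' : ℕ, μ (⋃ i ∈ U,
          (A'' ∩ Hset n e (k + 1) (t + m' + 1) (U.erase i))
            ∩ ⋂ j ∈ S, {ω : Ω | Xg n e j ω = m j})
          = μ A'' * μ (Wset n e U t (m' + 1)) * ∏ j ∈ S, gE p (n - j) (m j) := by
        intro m'
        rw [measure_biUnion_finset (hdisj2 m') (fun i _ =>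
          (hA''m.inter (Ft_le hmeas (t + m' + 1) _
            (Hset_Ft (k + 1) (t + m' + 1) (U.erase i)))).inter hRm)]
        have h1 : ∀ i ∈ U, μ ((A'' ∩ Hset n e (k + 1) (t + m' + 1) (U.erase i))
            ∩ ⋂ j ∈ S, {ω : Ω | Xg n e j ω = m j})
            = μ (A'' ∩ Hset n e (k + 1) (t + m' + 1) (U.erase i))
              * ∏ j ∈ S, gE p (n - j) (m j) := by
          intro i hi
          exact ih (k + 1) (by omega) (t + m' + 1) (U.erase i)
            (by rw [Finset.card_erase_of_mem hi]; omega)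
            A'' (Ft_mono (by omega) _ hA''F) S hS' m hm
        rw [Finset.sum_congr rfl h1, ← Finset.sum_mul]
        congr 1
        have hdisj3 : (↑U : Set (Fin n)).PairwiseDisjoint
            (fun i => A'' ∩ Hset n e (k + 1) (t + m' + 1) (U.erase i)) := by
          intro i hi i' hi' hne
          refine Set.disjoint_left.mpr ?_
          rintro ω ⟨-, hH⟩ ⟨-, hH'⟩
          exact erase_ne (Finset.mem_coe.mp hi') hne (Hset_state_ne hH hH').2
        rw [← measure_biUnion_finset hdisj3 (fun i _ =>
          hA''m.inter (Ft_le hmeas (t + m' + 1) _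
            (Hset_Ft (k + 1) (t + m' + 1) (U.erase i))))]
        have hUW : (⋃ i ∈ U, A'' ∩ Hset n e (k + 1) (t + m' + 1) (U.erase i))
            = A'' ∩ Wset n e U t (m' + 1) := by
          ext ω
          simp only [Set.mem_iUnion, Set.mem_inter_iff]
          constructor
          · rintro ⟨i, hiU, hω, hHi⟩
            refine ⟨hω, (HW (hA''sub hω) (by omega : 1 ≤ m' + 1)).mpr ⟨i, hiU, ?_⟩⟩
            rwa [show t + (m' + 1) = t + m' + 1 by omega]
          · rintro ⟨hω, hWm⟩
            obtain ⟨i, hiU, hHi⟩ := (HW (hA''sub hω) (by omega : 1 ≤ m' + 1)).mp hWm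
            refine ⟨i, hiU, hω, ?_⟩
            rwa [show t + m' + 1 = t + (m' + 1) by omega]
        rw [hUW]
        exact past_future hmeas hindep t hA''F Wset_Gt
      rw [tsum_congr hterm, ENNReal.tsum_mul_right, ENNReal.tsum_mul_left,
        tsum_W hmeas hp0 hp1 hindep hdist hUne t, mul_one]

end KeyLemma


section Final

variable [MeasurableSpace Ω] {μ : Measure Ω} [IsProbabilityMeasure μ] {p : ℝ}

lemma Hzero : Hset n e 0 0 Finset.univ = (Set.univ : Set Ω) := by
  ext ω
  simp only [Hset, Set.mem_setOf_eq, Set.mem_univ, iff_true]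
  exact ⟨rfl, fun j hj => by omega⟩

lemma master (hmeas : ∀ i t, Measurable (e i t)) (hp0 : 0 < p) (hp1 : p < 1)
    (hindep : iIndepFun
      (fun it : Fin n × ℕ => e it.1 (it.2 + 1)) μ)
    (hdist : ∀ (i : Fin n) (t : ℕ), 1 ≤ t → μ {ω | e i t ω = true} = ENNReal.ofReal p)
    (S : Finset ℕ) (hS : ∀ j ∈ S, j < n) (m : ℕ → ℕ) (hm : ∀ j ∈ S, 1 ≤ m j) :
    μ (⋂ j ∈ S, {ω : Ω | Xg n e j ω = m j}) = ∏ j ∈ S, gE p (n - j) (m j) := by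
  have h := key hmeas hp0 hp1 hindep hdist n 0 (by omega) 0 Finset.univ (by simp)
    Set.univ (@MeasurableSet.univ _ (Ft n e 0)) S (fun j hj => ⟨Nat.zero_le j, hS j hj⟩) m hm
  rw [Hzero] at h
  simpa using h

lemma X0_null (hmeas : ∀ i t, Measurable (e i t)) (hp0 : 0 < p) (hp1 : p < 1)
    (hindep : iIndepFun
      (fun it : Fin n × ℕ => e it.1 (it.2 + 1)) μ)
    (hdist : ∀ (i : Fin n) (t : ℕ), 1 ≤ t → μ {ω | e i t ω = true} = ENNReal.ofReal p)
    {j : ℕ} (hj : j < n) :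
    μ {ω : Ω | Xg n e j ω = 0} = 0 := by
  classical
  have hsub : {ω : Ω | Xg n e j ω = 0} ⊆
      ⋃ (k : ℕ) (_ : k ≤ j) (t : ℕ) (U : Finset (Fin n)) (_ : U.card = n - k),
        Hset n e k t U ∩ Dset n e U t := by
    intro ω hω
    have hPj : ¬ ((zigzagStep n e ω j).1 < (zigzagStep n e ω (j + 1)).1) := by
      simp only [Set.mem_setOf_eq, Xg] at hω
      omega
    have hPex : ∃ k, ¬ ((zigzagStep n e ω k).1 < (zigzagStep n e ω (k + 1)).1) := ⟨j, hPj⟩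
    set k := Nat.find hPex with hkdef
    have hk : ¬ ((zigzagStep n e ω k).1 < (zigzagStep n e ω (k + 1)).1) := Nat.find_spec hPex
    have hkj : k ≤ j := Nat.find_min' hPex hPj
    have hproper : ∀ j', j' < k → (zigzagStep n e ω j').1 < (zigzagStep n e ω (j' + 1)).1 :=
      fun j' hj' => not_not.mp (Nat.find_min hPex hj')
    have hcard := card_of_proper k hproper
    have hD : ω ∈ Dset n e (zigzagStep n e ω k).2 (zigzagStep n e ω k).1 := by
      intro s hs j' hj'U
      have hfst : (zigzagStep n e ω (k + 1)).1
          = sInf (Sev n e (zigzagStep n e ω k) ω) := rfl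
      have hSem : Sev n e (zigzagStep n e ω k) ω = ∅ := by
        by_contra h
        rw [← Ne, ← Set.nonempty_iff_ne_empty] at h
        have hmem := Nat.sInf_mem h
        rw [← hfst] at hmem
        exact hk hmem.1
      have hns : s ∉ Sev n e (zigzagStep n e ω k) ω := by
        rw [hSem]; exact Set.notMem_empty s
      simp only [Sev, Set.mem_setOf_eq, not_and] at hns
      have h2 := hns hs
      rw [Finset.not_nonempty_iff_eq_empty, Finset.filter_eq_empty_iff] at h2
      have h3 := h2 hj'U
      revert h3
      cases e j' s ω <;> simp
    simp only [Set.mem_iUnion]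
    exact ⟨k, hkj, (zigzagStep n e ω k).1, (zigzagStep n e ω k).2, hcard, ⟨rfl, hproper⟩, hD⟩
  apply measure_mono_null hsub
  refine measure_iUnion_null fun k => measure_iUnion_null fun hk =>
    measure_iUnion_null fun t => measure_iUnion_null fun U =>
    measure_iUnion_null fun hcard => ?_
  apply measure_mono_null Set.inter_subset_right
  exact Dnull hmeas hp0 hp1 hindep hdist (Finset.card_pos.mp (by omega)) t

lemma comap_nat (f : Ω → ℕ) :
    MeasurableSpace.comap f inferInstance
      = MeasurableSpace.generateFrom (Set.range fun c : ℕ => f ⁻¹' {c}) := by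
  apply le_antisymm
  · rintro s ⟨s', -, rfl⟩
    rw [← Set.biUnion_preimage_singleton]
    exact MeasurableSet.biUnion s'.to_countable fun c _ =>
      MeasurableSpace.measurableSet_generateFrom ⟨c, rfl⟩
  · apply MeasurableSpace.generateFrom_le
    rintro _ ⟨c, rfl⟩
    exact ⟨{c}, trivial, rfl⟩

end Final

end ZZaux

/-- **Gap lemma for Theorem 3.** In the ZigZag model with `n` senders and erasure
probability `p ∈ (0,1)` (the erasure indicators `e i t` for `t ≥ 1` being i.i.d. with
`P(e i t = 1) = p`), the inter-acknowledgment times `X_k = T_k - T_{k-1}` (here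
zero-indexed: `X_k ω = (zigzagStep n e ω (k+1)).1 - (zigzagStep n e ω k).1` for
`k : Fin n`) are mutually independent, and `X_k` is geometric on `{1,2,…}` with success
probability `1 - p^{n-k}` (zero-indexed; i.e. `1 - p^{n-k+1}` in one-indexed form):
`P(X_k = m) = (p^{n-k})^{m-1} (1 - p^{n-k})` for every integer `m ≥ 1`. -/


theorem zigzag_gaps_independent_geometric
    {Ω : Type*} [MeasurableSpace Ω] (μ : Measure Ω) [IsProbabilityMeasure μ]
    (p : ℝ) (hp0 : 0 < p) (hp1 : p < 1) (n : ℕ) (hn : 1 ≤ n)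
    (e : Fin n → ℕ → Ω → Bool) (hmeas : ∀ i t, Measurable (e i t))
    (hindep : iIndepFun
      (fun it : Fin n × ℕ => e it.1 (it.2 + 1)) μ)
    (hdist : ∀ (i : Fin n) (t : ℕ), 1 ≤ t →
      μ {ω | e i t ω = true} = ENNReal.ofReal p) :
    iIndepFun
      (fun (k : Fin n) (ω : Ω) =>
        (zigzagStep n e ω ((k : ℕ) + 1)).1 - (zigzagStep n e ω (k : ℕ)).1) μ ∧
    ∀ (k : Fin n) (m : ℕ), 1 ≤ m →
      μ {ω | (zigzagStep n e ω ((k : ℕ) + 1)).1 - (zigzagStep n e ω (k : ℕ)).1 = m} =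
        ENNReal.ofReal ((p ^ (n - (k : ℕ))) ^ (m - 1) * (1 - p ^ (n - (k : ℕ)))) := by
  classical
  have hsingle : ∀ (k : Fin n) (c : ℕ), 1 ≤ c →
      μ {ω | ZZaux.Xg n e (k : ℕ) ω = c}
        = ZZaux.gE p (n - (k : ℕ)) c := by
    intro k c hc
    have h := ZZaux.master hmeas hp0 hp1 hindep hdist {(k : ℕ)}
      (by intro j hj; simp only [Finset.mem_singleton] at hj; omega)
      (fun _ => c) (fun _ _ => hc)
    simpa using h
  constructor
  · -- independence
    set X : Fin n → Ω → ℕ := fun k ω =>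
      (zigzagStep n e ω ((k : ℕ) + 1)).1 - (zigzagStep n e ω (k : ℕ)).1 with hXdef
    have hXmeas : ∀ k : Fin n, Measurable (X k) := fun k =>
      (ZZaux.zzfst_meas hmeas _).sub (ZZaux.zzfst_meas hmeas _)
    show iIndep (fun k : Fin n => MeasurableSpace.comap (X k) inferInstance) μ
    apply iIndepSets.iIndep (fun k => Measurable.comap_le (hXmeas k))
      (fun k => Set.range fun c : ℕ => X k ⁻¹' {c})
    · -- pi system
      intro k
      rintro _ ⟨c1, rfl⟩ _ ⟨c2, rfl⟩ hne
      rcases eq_or_ne c1 c2 with rfl | hc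
      · rw [Set.inter_self]; exact ⟨c1, rfl⟩
      · exfalso
        obtain ⟨ω, h1, h2⟩ := hne
        simp only [Set.mem_inter_iff, Set.mem_preimage, Set.mem_singleton_iff] at h1 h2
        exact hc (h1.symm.trans h2)
    · -- generates
      exact fun k => ZZaux.comap_nat (X k)
    · -- independence of the pi systems
      rw [iIndepSets_iff]
      intro s f hf
      have hf' : ∀ i ∈ s, ∃ c : ℕ, X i ⁻¹' {c} = f i := fun i hi => hf i hi
      choose! mm hmm using hf'
      by_cases hall : ∀ i ∈ s, 1 ≤ mm i
      · set mfun : ℕ → ℕ := fun j => if h : j < n then mm ⟨j, h⟩ else 1 with hmfun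
        have hmmeq : ∀ i : Fin n, mfun (i : ℕ) = mm i := by
          intro i
          simp only [hmfun, i.isLt, dif_pos, Fin.eta]
        have hLHS : (⋂ i ∈ s, f i)
            = ⋂ j ∈ s.image (Fin.val), {ω : Ω | ZZaux.Xg n e j ω = mfun j} := by
          rw [Finset.set_biInter_finset_image]
          ext ω
          simp only [Set.mem_iInter]
          refine forall_congr' fun i => forall_congr' fun hi => ?_
          rw [← hmm i hi]
          simp only [Set.mem_preimage, Set.mem_singleton_iff, Set.mem_setOf_eq, hmmeq i]
          exact Iff.rfl
        have hmain := ZZaux.master hmeas hp0 hp1 hindep hdist (s.image (Fin.val))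
          (by
            intro j hj
            simp only [Finset.mem_image] at hj
            obtain ⟨i, -, rfl⟩ := hj
            exact i.isLt)
          mfun
          (by
            intro j hj
            simp only [Finset.mem_image] at hj
            obtain ⟨i, hi, rfl⟩ := hj
            rw [hmmeq i]
            exact hall i hi)
        rw [hLHS, hmain]
        rw [Finset.prod_image (fun i _ i' _ h => Fin.val_injective h)]
        apply Finset.prod_congr rfl
        intro i hi
        rw [hmmeq i, ← hmm i hi]
        have := hsingle i (mm i) (hall i hi)
        have heq : X i ⁻¹' {mm i} = {ω : Ω | ZZaux.Xg n e (i : ℕ) ω = mm i} := rfl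
        rw [heq, this]
      · push_neg at hall
        obtain ⟨i0, hi0, hmi0⟩ := hall
        have h0 : mm i0 = 0 := by omega
        have hf0 : μ (f i0) = 0 := by
          rw [← hmm i0 hi0, h0]
          have heq : X i0 ⁻¹' {0} = {ω : Ω | ZZaux.Xg n e (i0 : ℕ) ω = 0} := rfl
          rw [heq]
          exact ZZaux.X0_null hmeas hp0 hp1 hindep hdist i0.isLt
        rw [Finset.prod_eq_zero hi0 hf0]
        apply measure_mono_null ?_ hf0
        exact Set.biInter_subset_of_mem hi0
  · intro k m hm
    have h := hsingle k m hm
    rw [ZZaux.gE] at h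
    exact h
end

section
/- (Theorem 3) For ZigZag decoding with n senders and erasure probability p ∈ (0,1), the delivery time T_D(n) = T_n is almost surely finite and its expectation equals E[T_D(n)] = Σ_{k=1}^{n} 1/(1 − p^k). -/
open MeasureTheory ProbabilityTheory

open scoped ENNReal NNReal

namespace Zig

variable {n : ℕ}

/-- deterministic version -/
noncomputable def D (n : ℕ) (v : Fin n → ℕ → Bool) : ℕ → ℕ × Finset (Fin n)
  | 0 => (0, Finset.univ)
  | k + 1 =>
    let prev := D n v k
    let t := sInf {t : ℕ | prev.1 < t ∧
      (prev.2.filter (fun i => v i t = false)).Nonempty}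
    (t, prev.2 \ prev.2.filter (fun i =>
      v i t = false ∧ ∀ j ∈ prev.2, v j t = false → i ≤ j))

lemma zig_eq {Ω : Type*} (n : ℕ) (e : Fin n → ℕ → Ω → Bool) (ω : Ω) (k : ℕ) :
    zigzagStep n e ω k = D n (fun i t => e i t ω) k := by
  induction k with
  | zero => rfl
  | succ k ih => simp only [zigzagStep, D, ih]

def SSet (v : Fin n → ℕ → Bool) (tu : ℕ × Finset (Fin n)) : Set ℕ :=
  {t | tu.1 < t ∧ (tu.2.filter (fun i => v i t = false)).Nonempty}

def Good (v : Fin n → ℕ → Bool) (k : ℕ) : Prop :=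
  ∀ j < k, (SSet v (D n v j)).Nonempty

lemma D_succ (v : Fin n → ℕ → Bool) (k : ℕ) :
    D n v (k + 1) = (sInf (SSet v (D n v k)),
      (D n v k).2 \ (D n v k).2.filter (fun i =>
        v i (sInf (SSet v (D n v k))) = false ∧
        ∀ j ∈ (D n v k).2, v j (sInf (SSet v (D n v k))) = false → i ≤ j)) := rfl

lemma good_mono {v : Fin n → ℕ → Bool} {k l : ℕ} (h : Good v k) (hl : l ≤ k) : Good v l :=
  fun j hj => h j (lt_of_lt_of_le hj hl)

lemma sInf_mem_SSet {v : Fin n → ℕ → Bool} {k : ℕ} (h : Good v (k+1)) :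
    sInf (SSet v (D n v k)) ∈ SSet v (D n v k) :=
  Nat.sInf_mem (h k (Nat.lt_succ_self k))

lemma T_lt_succ {v : Fin n → ℕ → Bool} {k : ℕ} (h : Good v (k+1)) :
    (D n v k).1 < (D n v (k+1)).1 := by
  have := sInf_mem_SSet (n := n) h
  rw [D_succ]
  exact this.1

lemma T_mono {v : Fin n → ℕ → Bool} {k l : ℕ} (h : Good v k) (hl : l ≤ k) :
    (D n v l).1 ≤ (D n v k).1 := by
  induction k with
  | zero => exact le_of_eq (by rw [Nat.le_zero.mp hl])
  | succ k ih =>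
    rcases Nat.lt_succ_iff_lt_or_eq.mp (Nat.lt_succ_of_le hl) with h' | h'
    · exact le_trans (ih (good_mono h (Nat.le_succ k)) (Nat.lt_succ_iff.mp h')) (le_of_lt (T_lt_succ h))
    · exact h' ▸ le_refl _

/-- the removed filter is a singleton when the step is good -/
lemma removed_card {v : Fin n → ℕ → Bool} {k : ℕ} (h : Good v (k+1)) :
    ((D n v k).2.filter (fun i =>
      v i (sInf (SSet v (D n v k))) = false ∧
      ∀ j ∈ (D n v k).2, v j (sInf (SSet v (D n v k))) = false → i ≤ j)).card = 1 := by
  set t := sInf (SSet v (D n v k)) with ht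
  have hmem := sInf_mem_SSet (n := n) h
  obtain ⟨-, hne⟩ := hmem
  set F0 := (D n v k).2.filter (fun i => v i t = false) with hF0
  have hne' : F0.Nonempty := hne
  set i0 := F0.min' hne' with hi0
  have hi0mem : i0 ∈ F0 := F0.min'_mem hne'
  rw [Finset.mem_filter] at hi0mem
  rw [Finset.card_eq_one]
  refine ⟨i0, ?_⟩
  ext i
  simp only [Finset.mem_filter, Finset.mem_singleton]
  constructor
  · rintro ⟨hiU, hif, hmin⟩
    have h1 : i ≤ i0 := hmin i0 hi0mem.1 hi0mem.2
    have h2 : i0 ≤ i := F0.min'_le i (by simp [hF0, Finset.mem_filter, hiU, hif])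
    exact le_antisymm h1 h2
  · rintro rfl
    exact ⟨hi0mem.1, hi0mem.2, fun j hj hjf => F0.min'_le j (by simp [hF0, Finset.mem_filter, hj, hjf])⟩

lemma card_D {v : Fin n → ℕ → Bool} {k : ℕ} (h : Good v k) (hk : k ≤ n) :
    ((D n v k).2).card = n - k := by
  induction k with
  | zero => simp [D]
  | succ k ih =>
    have hprev := ih (good_mono h (Nat.le_succ k)) (le_trans (Nat.le_succ k) hk)
    rw [D_succ]
    have hsub : ((D n v k).2.filter (fun i =>
        v i (sInf (SSet v (D n v k))) = false ∧
        ∀ j ∈ (D n v k).2, v j (sInf (SSet v (D n v k))) = false → i ≤ j)) ⊆ (D n v k).2 :=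
      Finset.filter_subset _ _
    rw [Finset.card_sdiff_of_subset hsub, removed_card h, hprev]
    omega

/-- locality: D depends only on values up to the current time, for good trajectories -/
lemma locality {v w : Fin n → ℕ → Bool} {k : ℕ} (hg : Good v k)
    (hagree : ∀ i s, 1 ≤ s → s ≤ (D n v k).1 → w i s = v i s) :
    (∀ j ≤ k, D n w j = D n v j) ∧ Good w k := by
  induction k with
  | zero =>
    constructor
    · intro j hj; interval_cases j; rfl
    · intro j hj; omega
  | succ k ih =>
    have hgk : Good v k := good_mono hg (Nat.le_succ k)
    have hlt : (D n v k).1 < (D n v (k+1)).1 := T_lt_succ hg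
    have hih := ih hgk (fun i s h1 h2 => hagree i s h1 (le_trans h2 (le_of_lt hlt)))
    have hDk : D n w k = D n v k := hih.1 k le_rfl
    set t' := sInf (SSet v (D n v k)) with ht'
    have ht'mem : t' ∈ SSet v (D n v k) := sInf_mem_SSet hg
    have ht'eq : (D n v (k+1)).1 = t' := rfl
    have ht'pos : 1 ≤ t' := lt_of_le_of_lt (Nat.zero_le _) ht'mem.1
    -- values agree at each s ∈ [1, t']
    have hag : ∀ i s, 1 ≤ s → s ≤ t' → w i s = v i s := by
      intro i s h1 h2; exact hagree i s h1 (by rw [ht'eq]; exact h2)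
    -- membership in SSet w (D n v k) for s ≤ t' matches
    have hmem_iff : ∀ s ≤ t', (s ∈ SSet w (D n v k) ↔ s ∈ SSet v (D n v k)) := by
      intro s hs
      unfold SSet
      simp only [Set.mem_setOf_eq]
      constructor
      · rintro ⟨h1, i, hi⟩
        rw [Finset.mem_filter] at hi
        refine ⟨h1, ⟨i, Finset.mem_filter.mpr ⟨hi.1, ?_⟩⟩⟩
        rw [← hag i s (by omega) hs]; exact hi.2
      · rintro ⟨h1, i, hi⟩
        rw [Finset.mem_filter] at hi
        refine ⟨h1, ⟨i, Finset.mem_filter.mpr ⟨hi.1, ?_⟩⟩⟩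
        rw [hag i s (by omega) hs]; exact hi.2
    have ht'w : t' ∈ SSet w (D n v k) := (hmem_iff t' le_rfl).mpr ht'mem
    have hinf_w : sInf (SSet w (D n w k)) = t' := by
      rw [hDk]
      refine le_antisymm (Nat.sInf_le ht'w) ?_
      by_contra hc
      push_neg at hc
      have hm := Nat.sInf_mem (Set.nonempty_of_mem ht'w)
      have : sInf (SSet w (D n v k)) ∈ SSet v (D n v k) :=
        (hmem_iff _ (le_of_lt hc)).mp hm
      exact absurd (Nat.sInf_le this) (by omega)
    have hfilter : ∀ (t : ℕ), t = t' →
        (D n v k).2.filter (fun i => w i t = false ∧ ∀ j ∈ (D n v k).2, w j t = false → i ≤ j) =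
        (D n v k).2.filter (fun i => v i t = false ∧ ∀ j ∈ (D n v k).2, v j t = false → i ≤ j) := by
      rintro t rfl
      apply Finset.filter_congr
      intro i hi
      have hwv : ∀ j, j ∈ (D n v k).2 → w j t' = v j t' := fun j _ => hag j t' ht'pos le_rfl
      simp only [hwv i hi]
      constructor
      · rintro ⟨h1, h2⟩; exact ⟨h1, fun j hj hjf => h2 j hj (by rw [hwv j hj]; exact hjf)⟩
      · rintro ⟨h1, h2⟩; exact ⟨h1, fun j hj hjf => h2 j hj (by rw [← hwv j hj]; exact hjf)⟩
    have hstep : D n w (k+1) = D n v (k+1) := by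
      rw [D_succ, D_succ, hinf_w, hDk, hfilter _ rfl, ← ht']
    refine ⟨?_, ?_⟩
    · intro j hj
      rcases Nat.lt_succ_iff_lt_or_eq.mp (Nat.lt_succ_of_le hj) with h' | h'
      · exact hih.1 j (Nat.lt_succ_iff.mp h')
      · rw [h', hstep]
    · intro j hj
      rcases Nat.lt_succ_iff_lt_or_eq.mp hj with h' | h'
      · exact hih.2 j h'
      · rw [h', hDk]
        exact Set.nonempty_of_mem ht'w


lemma T_telescope {v : Fin n → ℕ → Bool} {m : ℕ} (h : Good v m) :
    ∀ j ≤ m, (∑ k ∈ Finset.range j, ((D n v (k+1)).1 - (D n v k).1)) = (D n v j).1 := by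
  intro j hj
  induction j with
  | zero => simp [D]
  | succ j ih =>
    rw [Finset.sum_range_succ, ih (le_trans (Nat.le_succ j) hj)]
    have := T_lt_succ (good_mono h hj)
    omega

section Prob

variable {Ω : Type*} [MeasurableSpace Ω] {μ : Measure Ω} [IsProbabilityMeasure μ]
  {p : ℝ} {n : ℕ} {e : Fin n → ℕ → Ω → Bool}

/-- probability weight of a single bit -/
noncomputable def r (p : ℝ) (b : Bool) : ℝ≥0∞ :=
  if b then ENNReal.ofReal p else 1 - ENNReal.ofReal p

/-- coordinate-value event -/
def CV (e : Fin n → ℕ → Ω → Bool) (B : Finset (Fin n × ℕ)) (b : Fin n × ℕ → Bool) : Set Ω :=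
  {ω | ∀ x ∈ B, e x.1 x.2 ω = b x}

lemma CV_eq_biInter (B : Finset (Fin n × ℕ)) (b : Fin n × ℕ → Bool) :
    CV e B b = ⋂ x ∈ B, (e x.1 x.2) ⁻¹' {b x} := by
  ext ω; simp [CV]

lemma CV_meas (hmeas : ∀ i t, Measurable (e i t)) (B : Finset (Fin n × ℕ))
    (b : Fin n × ℕ → Bool) : MeasurableSet (CV e B b) := by
  rw [CV_eq_biInter]
  exact MeasurableSet.biInter (B : Set (Fin n × ℕ)).to_countable
    (fun x _ => (hmeas x.1 x.2) (measurableSet_singleton (b x)))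

lemma single_prob (hmeas : ∀ i t, Measurable (e i t))
    (hdist : ∀ (i : Fin n) (t : ℕ), 1 ≤ t → μ {ω | e i t ω = true} = ENNReal.ofReal p)
    (i : Fin n) (t : ℕ) (ht : 1 ≤ t) (b : Bool) :
    μ ((e i t) ⁻¹' {b}) = r p b := by
  cases b with
  | true =>
    have : (e i t) ⁻¹' {true} = {ω | e i t ω = true} := by ext ω; simp
    rw [this, hdist i t ht]; rfl
  | false =>
    have hc : (e i t) ⁻¹' {false} = {ω | e i t ω = true}ᶜ := by
      ext ω; cases h : e i t ω <;> simp [h]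
    have hm : MeasurableSet {ω | e i t ω = true} := by
      have : {ω | e i t ω = true} = (e i t) ⁻¹' {true} := by ext ω; simp
      rw [this]; exact (hmeas i t) (measurableSet_singleton true)
    rw [hc, prob_compl_eq_one_sub hm, hdist i t ht]; rfl

lemma CV_prob (hmeas : ∀ i t, Measurable (e i t))
    (hindep : iIndepFun
      (fun it : Fin n × ℕ => e it.1 (it.2 + 1)) μ)
    (hdist : ∀ (i : Fin n) (t : ℕ), 1 ≤ t → μ {ω | e i t ω = true} = ENNReal.ofReal p)
    (B : Finset (Fin n × ℕ)) (hB : ∀ x ∈ B, 1 ≤ x.2) (b : Fin n × ℕ → Bool) :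
    μ (CV e B b) = ∏ x ∈ B, r p (b x) := by
  classical
  set sh : Fin n × ℕ → Fin n × ℕ := fun x => (x.1, x.2 - 1) with hsh
  have hinj : ∀ x ∈ B, ∀ y ∈ B, sh x = sh y → x = y := by
    rintro ⟨i, s⟩ hx ⟨j, u⟩ hy hxy
    have h1 := hB _ hx; have h2 := hB _ hy
    simp only [hsh, Prod.mk.injEq] at hxy ⊢
    exact ⟨hxy.1, by omega⟩
  set B' := B.image sh with hB'
  have hset : CV e B b = ⋂ y ∈ B', (fun ω => e y.1 (y.2 + 1) ω) ⁻¹' {b (y.1, y.2 + 1)} := by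
    ext ω
    simp only [CV, Set.mem_setOf_eq, Set.mem_iInter, Set.mem_preimage, Set.mem_singleton_iff,
      hB', Finset.mem_image]
    constructor
    · rintro h y ⟨x, hx, rfl⟩
      have hx2 := hB _ hx
      simp only [hsh]
      rw [Nat.sub_add_cancel hx2]
      exact h x hx
    · intro h x hx
      have hx2 := hB _ hx
      have := h (sh x) ⟨x, hx, rfl⟩
      simp only [hsh] at this
      rw [Nat.sub_add_cancel hx2] at this
      exact this
  have hprod := (iIndepFun_iff_measure_inter_preimage_eq_mul.mp hindep) B'
    (sets := fun y => ({b (y.1, y.2 + 1)} : Set Bool))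
    (fun y _ => measurableSet_singleton _)
  rw [hset, hprod]
  rw [hB', Finset.prod_image hinj]
  apply Finset.prod_congr rfl
  intro x hx
  have hx2 := hB _ hx
  simp only [hsh]
  rw [show x.2 - 1 + 1 = x.2 from Nat.sub_add_cancel hx2]
  exact single_prob hmeas hdist x.1 x.2 hx2 (b x)

/-- extension of a finite matrix of values to all times -/
def extv {n : ℕ} (t : ℕ) (c : Fin n → Fin t → Bool) : Fin n → ℕ → Bool :=
  fun i s => if h : s - 1 < t ∧ 1 ≤ s then c i ⟨s - 1, h.1⟩ else true

lemma extv_eq {n : ℕ} (t : ℕ) (c : Fin n → Fin t → Bool) (i : Fin n) (s : ℕ)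
    (h1 : 1 ≤ s) (h2 : s ≤ t) : extv t c i s = c i ⟨s - 1, by omega⟩ := by
  rw [extv, dif_pos ⟨by omega, h1⟩]

variable (e) in
/-- the sample-path matrix -/
def Vv (ω : Ω) : Fin n → ℕ → Bool := fun i t => e i t ω

def Bt (n t : ℕ) : Finset (Fin n × ℕ) := Finset.univ ×ˢ Finset.Icc 1 t

lemma mem_Bt {n t : ℕ} (x : Fin n × ℕ) : x ∈ Bt n t ↔ 1 ≤ x.2 ∧ x.2 ≤ t := by
  simp [Bt, Finset.mem_product]

variable (e) in
def GEset (k t : ℕ) (U : Finset (Fin n)) : Set Ω :=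
  {ω | D n (Vv e ω) k = (t, U) ∧ Good (Vv e ω) k}

def Pred (n k t : ℕ) (U : Finset (Fin n)) (c : Fin n → Fin t → Bool) : Prop :=
  D n (extv t c) k = (t, U) ∧ Good (extv t c) k

variable (e) in
open Classical in
noncomputable def Ec (k t : ℕ) (U : Finset (Fin n)) (c : Fin n → Fin t → Bool) : Set Ω :=
  if Pred n k t U c then CV e (Bt n t) (fun x => extv t c x.1 x.2) else ∅

lemma mem_CV_Bt {t : ℕ} {c : Fin n → Fin t → Bool} {ω : Ω} :
    ω ∈ CV e (Bt n t) (fun x => extv t c x.1 x.2) ↔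
      ∀ (i : Fin n) (s : Fin t), e i (s + 1) ω = c i s := by
  constructor
  · intro h i s
    have hm : ((i, (s : ℕ) + 1) : Fin n × ℕ) ∈ Bt n t := (mem_Bt _).mpr ⟨by omega, by
      have := s.isLt; omega⟩
    have := h _ hm
    dsimp only at this
    rw [extv_eq t c i (s + 1) (by omega) (by have := s.isLt; omega)] at this
    simpa using this
  · intro h x hx
    obtain ⟨h1, h2⟩ := (mem_Bt x).mp hx
    dsimp only
    rw [extv_eq t c x.1 x.2 h1 h2]
    have := h x.1 ⟨x.2 - 1, by omega⟩
    simpa [Nat.sub_add_cancel h1] using this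

lemma CV_congr {B : Finset (Fin n × ℕ)} {b b' : Fin n × ℕ → Bool}
    (h : ∀ x ∈ B, b x = b' x) : CV e B b = CV e B b' := by
  ext ω
  simp only [CV, Set.mem_setOf_eq]
  exact ⟨fun hb x hx => (h x hx) ▸ hb x hx, fun hb x hx => (h x hx) ▸ hb x hx⟩

lemma GE_decomp (k t : ℕ) (U : Finset (Fin n)) :
    GEset e k t U = ⋃ c : Fin n → Fin t → Bool, Ec e k t U c := by
  classical
  ext ω
  simp only [GEset, Set.mem_setOf_eq, Set.mem_iUnion]
  constructor
  · rintro ⟨hD, hG⟩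
    set c : Fin n → Fin t → Bool := fun i s => e i (s + 1) ω with hc
    have hagree : ∀ (i : Fin n) (s : ℕ), 1 ≤ s → s ≤ (D n (Vv e ω) k).1 →
        extv t c i s = Vv e ω i s := by
      intro i s h1 h2
      rw [hD] at h2
      rw [extv_eq t c i s h1 h2]
      simp only [hc, Vv]
      congr 1
      omega
    have hloc := locality hG hagree
    refine ⟨c, ?_⟩
    rw [Ec, if_pos ⟨(hloc.1 k le_rfl).trans hD, hloc.2⟩]
    exact mem_CV_Bt.mpr (fun i s => rfl)
  · rintro ⟨c, hc⟩
    rw [Ec] at hc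
    split_ifs at hc with hP
    · have hcv := mem_CV_Bt.mp hc
      have hDt : (D n (extv t c) k).1 = t := by rw [hP.1]
      have hagree : ∀ (i : Fin n) (s : ℕ), 1 ≤ s → s ≤ (D n (extv t c) k).1 →
          Vv e ω i s = extv t c i s := by
        intro i s h1 h2
        rw [hDt] at h2
        rw [extv_eq t c i s h1 h2]
        have := hcv i ⟨s - 1, by omega⟩
        simpa [Vv, Nat.sub_add_cancel h1] using this
      have hloc := locality hP.2 hagree
      exact ⟨(hloc.1 k le_rfl).trans hP.1, hloc.2⟩
    · exact absurd hc (Set.notMem_empty ω)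

lemma Ec_disjoint (k t : ℕ) (U : Finset (Fin n)) :
    Pairwise (Function.onFun Disjoint (Ec e k t U)) := by
  intro c c' hne
  rw [Function.onFun, Set.disjoint_left]
  intro ω h1 h2
  rw [Ec] at h1 h2
  split_ifs at h1 h2
  · have hc := mem_CV_Bt.mp h1
    have hc' := mem_CV_Bt.mp h2
    apply hne
    funext i s
    rw [← hc i s, ← hc' i s]
  all_goals first
    | exact absurd h1 (Set.notMem_empty ω)
    | exact absurd h2 (Set.notMem_empty ω)

lemma Ec_meas (hmeas : ∀ i t, Measurable (e i t)) (k t : ℕ) (U : Finset (Fin n))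
    (c : Fin n → Fin t → Bool) : MeasurableSet (Ec e k t U c) := by
  rw [Ec]
  split_ifs
  · exact CV_meas hmeas _ _
  · exact MeasurableSet.empty

lemma GE_meas (hmeas : ∀ i t, Measurable (e i t)) (k t : ℕ) (U : Finset (Fin n)) :
    MeasurableSet (GEset e k t U) := by
  rw [GE_decomp]
  exact MeasurableSet.iUnion (fun c => Ec_meas hmeas k t U c)

lemma Ec_inter_CV (hmeas : ∀ i t, Measurable (e i t))
    (hindep : iIndepFun
      (fun it : Fin n × ℕ => e it.1 (it.2 + 1)) μ)
    (hdist : ∀ (i : Fin n) (t : ℕ), 1 ≤ t → μ {ω | e i t ω = true} = ENNReal.ofReal p)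
    (k t : ℕ) (U : Finset (Fin n)) (c : Fin n → Fin t → Bool)
    (B₂ : Finset (Fin n × ℕ)) (hB₂ : ∀ x ∈ B₂, t < x.2) (b₂ : Fin n × ℕ → Bool) :
    μ (Ec e k t U c ∩ CV e B₂ b₂) = μ (Ec e k t U c) * ∏ x ∈ B₂, r p (b₂ x) := by
  classical
  rw [Ec]
  split_ifs
  · set bc : Fin n × ℕ → Bool := fun x => if x.2 ≤ t then extv t c x.1 x.2 else b₂ x with hbc
    have h1 : CV e (Bt n t) (fun x => extv t c x.1 x.2) = CV e (Bt n t) bc := by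
      apply CV_congr
      intro x hx
      rw [hbc]
      simp only [if_pos ((mem_Bt x).mp hx).2]
    have h2 : CV e B₂ b₂ = CV e B₂ bc := by
      apply CV_congr
      intro x hx
      rw [hbc]
      simp only [if_neg (by have := hB₂ x hx; omega : ¬ x.2 ≤ t)]
    have hdisj : Disjoint (Bt n t) B₂ := by
      rw [Finset.disjoint_left]
      intro x hx hx2
      have := ((mem_Bt x).mp hx).2
      have := hB₂ x hx2
      omega
    have hunion : CV e (Bt n t) bc ∩ CV e B₂ bc = CV e (Bt n t ∪ B₂) bc := by
      ext ω
      simp only [CV, Set.mem_inter_iff, Set.mem_setOf_eq, Finset.mem_union]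
      constructor
      · rintro ⟨ha, hb⟩ x hx
        rcases hx with hx | hx
        · exact ha x hx
        · exact hb x hx
      · intro h
        exact ⟨fun x hx => h x (Or.inl hx), fun x hx => h x (Or.inr hx)⟩
    have hB1t : ∀ x ∈ Bt n t, 1 ≤ x.2 := fun x hx => ((mem_Bt x).mp hx).1
    have hBu : ∀ x ∈ Bt n t ∪ B₂, 1 ≤ x.2 := by
      intro x hx
      rcases Finset.mem_union.mp hx with hx | hx
      · exact hB1t x hx
      · have := hB₂ x hx; omega
    rw [h1, h2, hunion, CV_prob hmeas hindep hdist _ hBu, Finset.prod_union hdisj,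
      CV_prob hmeas hindep hdist _ hB1t]
    congr 1
    apply Finset.prod_congr rfl
    intro x hx
    rw [hbc]
    simp only [if_neg (by have := hB₂ x hx; omega : ¬ x.2 ≤ t)]
  · simp

lemma GE_inter_CV (hmeas : ∀ i t, Measurable (e i t))
    (hindep : iIndepFun
      (fun it : Fin n × ℕ => e it.1 (it.2 + 1)) μ)
    (hdist : ∀ (i : Fin n) (t : ℕ), 1 ≤ t → μ {ω | e i t ω = true} = ENNReal.ofReal p)
    (k t : ℕ) (U : Finset (Fin n))
    (B₂ : Finset (Fin n × ℕ)) (hB₂ : ∀ x ∈ B₂, t < x.2) (b₂ : Fin n × ℕ → Bool) :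
    μ (GEset e k t U ∩ CV e B₂ b₂) = μ (GEset e k t U) * ∏ x ∈ B₂, r p (b₂ x) := by
  rw [GE_decomp, Set.iUnion_inter]
  rw [measure_iUnion (fun c c' hne => (Ec_disjoint k t U hne).mono
        Set.inter_subset_left Set.inter_subset_left)
      (fun c => (Ec_meas hmeas k t U c).inter (CV_meas hmeas B₂ b₂))]
  rw [measure_iUnion (Ec_disjoint k t U) (Ec_meas hmeas k t U)]
  rw [← ENNReal.tsum_mul_right]
  exact tsum_congr (fun c => Ec_inter_CV hmeas hindep hdist k t U c B₂ hB₂ b₂)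

variable (e) in
def GoodSet (k : ℕ) : Set Ω := {ω | Good (Vv e ω) k}

lemma GE_pair_disjoint (k : ℕ) :
    Pairwise (Function.onFun Disjoint
      (fun tu : ℕ × Finset (Fin n) => GEset e k tu.1 tu.2)) := by
  intro tu tu' hne
  rw [Function.onFun, Set.disjoint_left]
  rintro ω ⟨h1, -⟩ ⟨h2, -⟩
  apply hne
  rw [h1] at h2
  obtain ⟨ha, hb⟩ := Prod.mk.injEq .. ▸ h2
  exact Prod.ext ha hb

lemma GoodSet_decomp (k : ℕ) :
    GoodSet e k = ⋃ tu : ℕ × Finset (Fin n), GEset e k tu.1 tu.2 := by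
  ext ω
  simp only [GoodSet, Set.mem_setOf_eq, Set.mem_iUnion]
  constructor
  · intro h
    exact ⟨((D n (Vv e ω) k).1, (D n (Vv e ω) k).2), ⟨rfl, h⟩⟩
  · rintro ⟨tu, -, h⟩
    exact h

lemma GoodSet_meas (hmeas : ∀ i t, Measurable (e i t)) (k : ℕ) :
    MeasurableSet (GoodSet e k) := by
  rw [GoodSet_decomp]
  exact MeasurableSet.iUnion (fun tu => GE_meas hmeas k tu.1 tu.2)

lemma GE_tsum (hmeas : ∀ i t, Measurable (e i t)) (k : ℕ) :
    ∑' tu : ℕ × Finset (Fin n), μ (GEset e k tu.1 tu.2) = μ (GoodSet e k) := by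
  rw [GoodSet_decomp, measure_iUnion (GE_pair_disjoint k)
    (fun tu => GE_meas hmeas k tu.1 tu.2)]

lemma GE_card {k t : ℕ} {U : Finset (Fin n)} (hk : k ≤ n)
    (h : (GEset e k t U).Nonempty) : U.card = n - k := by
  obtain ⟨ω, hω⟩ := h
  have := card_D hω.2 hk
  rw [hω.1] at this
  exact this

lemma GE_inter_fail (hmeas : ∀ i t, Measurable (e i t))
    (hindep : iIndepFun
      (fun it : Fin n × ℕ => e it.1 (it.2 + 1)) μ)
    (hdist : ∀ (i : Fin n) (t : ℕ), 1 ≤ t → μ {ω | e i t ω = true} = ENNReal.ofReal p)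
    (k t s : ℕ) (U : Finset (Fin n)) :
    μ (GEset e k t U ∩ CV e (U ×ˢ Finset.Ioc t (t + s)) (fun _ => true)) =
      μ (GEset e k t U) * (ENNReal.ofReal p) ^ (U.card * s) := by
  rw [GE_inter_CV hmeas hindep hdist k t U _ (fun x hx => by
    have := (Finset.mem_product.mp hx).2
    exact (Finset.mem_Ioc.mp this).1) _]
  congr 1
  rw [Finset.prod_const]
  simp [r, Finset.card_product, Nat.card_Ioc]

lemma goodset_full (hp1 : p < 1) (hmeas : ∀ i t, Measurable (e i t))
    (hindep : iIndepFun
      (fun it : Fin n × ℕ => e it.1 (it.2 + 1)) μ)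
    (hdist : ∀ (i : Fin n) (t : ℕ), 1 ≤ t → μ {ω | e i t ω = true} = ENNReal.ofReal p) :
    ∀ k ≤ n, μ (GoodSet e k) = 1 := by
  intro k
  induction k with
  | zero =>
    intro _
    have : GoodSet e 0 = Set.univ := by
      ext ω; simp [GoodSet, Good]
    rw [this, measure_univ]
  | succ k ih =>
    intro hk
    have h1 := ih (le_trans (Nat.le_succ k) hk)
    have hnull : μ (GoodSet e k \ GoodSet e (k+1)) = 0 := by
      have hsub : GoodSet e k \ GoodSet e (k+1) ⊆ ⋃ tu : ℕ × Finset (Fin n),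
          (GEset e k tu.1 tu.2 ∩ (GoodSet e (k+1))ᶜ) := by
        rintro ω ⟨hg, hb⟩
        exact Set.mem_iUnion.mpr ⟨((D n (Vv e ω) k).1, (D n (Vv e ω) k).2),
          ⟨⟨rfl, hg⟩, hb⟩⟩
      refine measure_mono_null hsub (measure_iUnion_null fun tu => ?_)
      obtain ⟨t, U⟩ := tu
      rcases Set.eq_empty_or_nonempty (GEset e k t U) with hE | hE
      · exact measure_mono_null Set.inter_subset_left (by rw [hE]; exact measure_empty)
      · have hcard : U.card = n - k := GE_card (le_trans (Nat.le_succ k) hk) hE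
        have hm1 : 1 ≤ n - k := by omega
        set q := ENNReal.ofReal p with hq
        have hq1 : q < 1 := by
          rw [hq]
          exact ENNReal.ofReal_lt_one.mpr hp1
        have hrr : q ^ (n - k) < 1 := pow_lt_one₀ zero_le hq1 (by omega)
        have hbound : ∀ s : ℕ, μ (GEset e k t U ∩ (GoodSet e (k+1))ᶜ) ≤ (q ^ (n - k)) ^ s := by
          intro s
          have hsub2 : GEset e k t U ∩ (GoodSet e (k+1))ᶜ ⊆
              GEset e k t U ∩ CV e (U ×ˢ Finset.Ioc t (t + s)) (fun _ => true) := by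
            rintro ω ⟨hge, hbad⟩
            refine ⟨hge, fun x hx => ?_⟩
            obtain ⟨hxU, hxt⟩ := Finset.mem_product.mp hx
            rw [Finset.mem_Ioc] at hxt
            by_contra hfalse
            have hfalse' : e x.1 x.2 ω = false := by
              cases hv : e x.1 x.2 ω
              · rfl
              · exact absurd hv hfalse
            apply hbad
            intro j hj
            rcases Nat.lt_succ_iff_lt_or_eq.mp hj with hj' | hj'
            · exact hge.2 j hj'
            · subst hj'
              refine ⟨x.2, ?_⟩
              rw [hge.1]
              exact ⟨hxt.1, ⟨x.1, Finset.mem_filter.mpr ⟨hxU, hfalse'⟩⟩⟩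
          calc μ (GEset e k t U ∩ (GoodSet e (k+1))ᶜ)
              ≤ μ (GEset e k t U ∩ CV e (U ×ˢ Finset.Ioc t (t + s)) (fun _ => true)) :=
                measure_mono hsub2
            _ = μ (GEset e k t U) * q ^ (U.card * s) :=
                GE_inter_fail hmeas hindep hdist k t s U
            _ ≤ 1 * q ^ ((n - k) * s) := by
                rw [hcard]
                exact mul_le_mul_left prob_le_one _
            _ = (q ^ (n - k)) ^ s := by rw [one_mul, pow_mul]
        have htend := ENNReal.tendsto_pow_atTop_nhds_zero_of_lt_one hrr
        have hle0 : μ (GEset e k t U ∩ (GoodSet e (k+1))ᶜ) ≤ 0 :=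
          ge_of_tendsto' htend hbound
        exact le_antisymm hle0 zero_le
    have hsub' : GoodSet e (k+1) ⊆ GoodSet e k := fun ω h => good_mono h (Nat.le_succ k)
    have hle : μ (GoodSet e k) ≤ μ (GoodSet e (k+1)) + μ (GoodSet e k \ GoodSet e (k+1)) := by
      calc μ (GoodSet e k) ≤ μ (GoodSet e k ∩ GoodSet e (k+1)) + μ (GoodSet e k \ GoodSet e (k+1)) :=
            measure_le_inter_add_diff μ _ _
        _ = μ (GoodSet e (k+1)) + μ (GoodSet e k \ GoodSet e (k+1)) := by
            rw [Set.inter_eq_right.mpr hsub']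
    rw [h1, hnull, add_zero] at hle
    exact le_antisymm prob_le_one hle

lemma inter_conull {G A : Set Ω} (hG : μ Gᶜ = 0) : μ (A ∩ G) = μ A := by
  refine le_antisymm (measure_mono Set.inter_subset_left) ?_
  calc μ A = μ ((A ∩ G) ∪ (A ∩ Gᶜ)) := by
        rw [← Set.inter_union_distrib_left, Set.union_compl_self, Set.inter_univ]
    _ ≤ μ (A ∩ G) + μ (A ∩ Gᶜ) := measure_union_le _ _
    _ ≤ μ (A ∩ G) + 0 := by
        gcongr
        exact le_of_eq (measure_mono_null Set.inter_subset_right hG)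
    _ = μ (A ∩ G) := add_zero _

variable (e) in
open Classical in
noncomputable def gk (k : ℕ) (ω : Ω) : ℕ :=
  if ω ∈ GoodSet e n then (D n (Vv e ω) (k+1)).1 - (D n (Vv e ω) k).1 else 0

lemma gk_meas (hmeas : ∀ i t, Measurable (e i t)) {k : ℕ} (hk : k + 1 ≤ n) :
    Measurable (gk e k) := by
  classical
  apply measurable_to_countable'
  intro m
  have hdec : gk e k ⁻¹' {m} =
      (⋃ (a : ℕ × Finset (Fin n)) (b : ℕ × Finset (Fin n)) (_ : b.1 - a.1 = m),
        (GEset e k a.1 a.2 ∩ GEset e (k+1) b.1 b.2 ∩ GoodSet e n)) ∪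
      (if m = 0 then (GoodSet e n)ᶜ else ∅) := by
    ext ω
    simp only [Set.mem_preimage, Set.mem_singleton_iff, Set.mem_union, Set.mem_iUnion,
      Set.mem_inter_iff, GEset, Set.mem_setOf_eq, Set.mem_compl_iff, Set.mem_ite_empty_right]
    constructor
    · intro hm
      by_cases hG : ω ∈ GoodSet e n
      · left
        refine ⟨D n (Vv e ω) k, D n (Vv e ω) (k+1), ?_, ⟨⟨⟨rfl, good_mono hG (by omega)⟩,
          ⟨rfl, good_mono hG hk⟩⟩, hG⟩⟩
        rw [gk, if_pos hG] at hm
        exact hm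
      · right
        rw [gk, if_neg hG] at hm
        exact ⟨hm.symm, hG⟩
    · rintro (⟨a, b, hab, ⟨⟨hDa, -⟩, ⟨hDb, -⟩⟩, hG⟩ | ⟨hm, hbad⟩)
      · rw [gk, if_pos hG, hDa, hDb]
        exact hab
      · rw [gk, if_neg hbad, hm]
  rw [hdec]
  refine MeasurableSet.union ?_ ?_
  · exact MeasurableSet.iUnion fun a => MeasurableSet.iUnion fun b =>
      MeasurableSet.iUnion fun _ =>
      (((GE_meas hmeas k a.1 a.2).inter (GE_meas hmeas (k+1) b.1 b.2)).inter
        (GoodSet_meas hmeas n))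
  · split_ifs
    · exact (GoodSet_meas hmeas n).compl
    · exact MeasurableSet.empty

lemma nat_lintegral {g : Ω → ℕ} (hg : Measurable g) :
    ∫⁻ ω, (g ω : ℝ≥0∞) ∂μ = ∑' s : ℕ, μ {ω | s < g ω} := by
  have hpt : ∀ ω, (g ω : ℝ≥0∞) =
      ∑' s : ℕ, Set.indicator {ω' | s < g ω'} (fun _ => (1:ℝ≥0∞)) ω := by
    intro ω
    have h1 : ∀ s : ℕ, Set.indicator {ω' | s < g ω'} (fun _ => (1:ℝ≥0∞)) ω =
        if s < g ω then 1 else 0 := by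
      intro s; by_cases h : s < g ω <;> simp [Set.indicator, h]
    rw [tsum_congr h1, tsum_eq_sum (s := Finset.range (g ω))
      (fun b hb => if_neg (by simpa using hb))]
    rw [Finset.sum_congr rfl (fun b hb => if_pos (Finset.mem_range.mp hb))]
    simp
  calc ∫⁻ ω, (g ω : ℝ≥0∞) ∂μ
      = ∫⁻ ω, ∑' s : ℕ, Set.indicator {ω' | s < g ω'} (fun _ => (1:ℝ≥0∞)) ω ∂μ :=
        lintegral_congr hpt
    _ = ∑' s : ℕ, ∫⁻ ω, Set.indicator {ω' | s < g ω'} (fun _ => (1:ℝ≥0∞)) ω ∂μ :=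
        lintegral_tsum (fun s => (measurable_const.indicator (hg trivial)).aemeasurable)
    _ = ∑' s : ℕ, μ {ω | s < g ω} :=
        tsum_congr (fun s => lintegral_indicator_one (hg trivial))

end Prob

end Zig

/-- **Theorem 3 (ZigZag delivery time).** In the ZigZag model with `n` senders and erasure
probability `p ∈ (0,1)` (the erasure indicators `e i t` for `t ≥ 1` being i.i.d. with
`P(e i t = 1) = p`), the delivery time `T_D(n) = T_n = (zigzagStep n e ω n).1` is almost
surely finite (each set whose infimum defines `T_{k+1}` is a.s. nonempty) and its
expectation equals `∑_{k=1}^n 1/(1 - p^k)`. -/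
theorem zigzag_delivery_time
    {Ω : Type*} [MeasurableSpace Ω] (μ : Measure Ω) [IsProbabilityMeasure μ]
    (p : ℝ) (hp0 : 0 < p) (hp1 : p < 1) (n : ℕ) (hn : 1 ≤ n)
    (e : Fin n → ℕ → Ω → Bool) (hmeas : ∀ i t, Measurable (e i t))
    (hindep : iIndepFun
      (fun it : Fin n × ℕ => e it.1 (it.2 + 1)) μ)
    (hdist : ∀ (i : Fin n) (t : ℕ), 1 ≤ t →
      μ {ω | e i t ω = true} = ENNReal.ofReal p) :
    (∀ᵐ ω ∂μ, ∀ k < n,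
      {t : ℕ | (zigzagStep n e ω k).1 < t ∧
        ((zigzagStep n e ω k).2.filter (fun i => e i t ω = false)).Nonempty}.Nonempty) ∧
    ∫ ω, ((zigzagStep n e ω n).1 : ℝ) ∂μ =
      ∑ k ∈ Finset.Icc 1 n, 1 / (1 - p ^ k) := by
  classical
  have hGmeas : MeasurableSet (Zig.GoodSet e n) := Zig.GoodSet_meas hmeas n
  have hGfull : μ (Zig.GoodSet e n) = 1 :=
    Zig.goodset_full hp1 hmeas hindep hdist n le_rfl
  have hGc : μ (Zig.GoodSet e n)ᶜ = 0 := by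
    rw [prob_compl_eq_one_sub hGmeas, hGfull, tsub_self]
  have hGae : ∀ᵐ ω ∂μ, ω ∈ Zig.GoodSet e n := by
    rw [MeasureTheory.ae_iff]
    exact hGc
  refine ⟨?_, ?_⟩
  · filter_upwards [hGae] with ω hG
    intro k hk
    obtain ⟨t, ht⟩ := hG k hk
    refine ⟨t, ?_⟩
    simp only [Zig.zig_eq, Set.mem_setOf_eq]
    exact ht
  · have hgkmeas : ∀ k ∈ Finset.range n, Measurable (Zig.gk e k) :=
      fun k hk => Zig.gk_meas hmeas (Finset.mem_range.mp hk)
    have hkey : ∀ k < n, ∫⁻ ω, (Zig.gk e k ω : ℝ≥0∞) ∂μ =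
        (1 - ENNReal.ofReal p ^ (n - k))⁻¹ := by
      intro k hk
      rw [Zig.nat_lintegral (Zig.gk_meas hmeas hk)]
      have hlev : ∀ s : ℕ, μ {ω | s < Zig.gk e k ω} =
          (ENNReal.ofReal p ^ (n - k)) ^ s := by
        intro s
        have hseq : {ω | s < Zig.gk e k ω} =
            (⋃ tu : ℕ × Finset (Fin n), (Zig.GEset e k tu.1 tu.2 ∩
              Zig.CV e (tu.2 ×ˢ Finset.Ioc tu.1 (tu.1 + s)) (fun _ => true))) ∩
            Zig.GoodSet e n := by
          ext ω
          simp only [Set.mem_setOf_eq, Set.mem_inter_iff, Set.mem_iUnion, Zig.GEset, Zig.CV]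
          constructor
          · intro hs
            have hG : ω ∈ Zig.GoodSet e n := by
              by_contra hG
              rw [Zig.gk, if_neg hG] at hs
              omega
            have hs' := hs
            rw [Zig.gk, if_pos hG] at hs'
            have hGk1 : Zig.Good (Zig.Vv e ω) (k+1) := Zig.good_mono hG hk
            have hT : (Zig.D n (Zig.Vv e ω) (k+1)).1 =
                sInf (Zig.SSet (Zig.Vv e ω) (Zig.D n (Zig.Vv e ω) k)) := by
              rw [Zig.D_succ]
            have hTlt := Zig.T_lt_succ (v := Zig.Vv e ω) hGk1
            refine ⟨⟨Zig.D n (Zig.Vv e ω) k, ⟨rfl, Zig.good_mono hG (by omega)⟩, ?_⟩, hG⟩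
            intro x hx
            obtain ⟨hxU, hxt⟩ := Finset.mem_product.mp hx
            rw [Finset.mem_Ioc] at hxt
            by_contra hfalse
            have hfalse' : e x.1 x.2 ω = false := by
              cases hv : e x.1 x.2 ω
              · rfl
              · exact absurd hv hfalse
            have hxS : x.2 ∈ Zig.SSet (Zig.Vv e ω) (Zig.D n (Zig.Vv e ω) k) :=
              ⟨hxt.1, ⟨x.1, Finset.mem_filter.mpr ⟨hxU, hfalse'⟩⟩⟩
            have hle := Nat.sInf_le hxS
            rw [← hT] at hle
            omega
          · rintro ⟨⟨tu, ⟨hD, -⟩, hCV⟩, hG⟩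
            have hGk1 : Zig.Good (Zig.Vv e ω) (k+1) := Zig.good_mono hG hk
            have hmem := Zig.sInf_mem_SSet (n := n) hGk1
            have hT : (Zig.D n (Zig.Vv e ω) (k+1)).1 =
                sInf (Zig.SSet (Zig.Vv e ω) (Zig.D n (Zig.Vv e ω) k)) := by
              rw [Zig.D_succ]
            rw [← hT, hD] at hmem
            obtain ⟨hgt, i, hi⟩ := hmem
            rw [Finset.mem_filter] at hi
            have hTbig : tu.1 + s < (Zig.D n (Zig.Vv e ω) (k+1)).1 := by
              by_contra hc
              push_neg at hc
              have hmemIoc : (Zig.D n (Zig.Vv e ω) (k+1)).1 ∈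
                  Finset.Ioc tu.1 (tu.1 + s) := Finset.mem_Ioc.mpr ⟨hgt, hc⟩
              have htrue := hCV (i, (Zig.D n (Zig.Vv e ω) (k+1)).1)
                (Finset.mem_product.mpr ⟨hi.1, hmemIoc⟩)
              have hfalse : e i (Zig.D n (Zig.Vv e ω) (k+1)).1 ω = false := hi.2
              rw [hfalse] at htrue
              exact Bool.false_ne_true htrue
            rw [Zig.gk, if_pos hG]
            have hDfst : (Zig.D n (Zig.Vv e ω) k).1 = tu.1 := by rw [hD]
            omega
        rw [hseq, Zig.inter_conull hGc]
        rw [measure_iUnion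
          (fun tu tu' hne => ((Zig.GE_pair_disjoint k) hne).mono
            Set.inter_subset_left Set.inter_subset_left)
          (fun tu => (Zig.GE_meas hmeas k tu.1 tu.2).inter (Zig.CV_meas hmeas _ _))]
        have hterm : ∀ tu : ℕ × Finset (Fin n),
            μ (Zig.GEset e k tu.1 tu.2 ∩
              Zig.CV e (tu.2 ×ˢ Finset.Ioc tu.1 (tu.1 + s)) (fun _ => true))
            = μ (Zig.GEset e k tu.1 tu.2) * (ENNReal.ofReal p ^ (n - k)) ^ s := by
          intro tu
          rcases Set.eq_empty_or_nonempty (Zig.GEset e k tu.1 tu.2) with hE | hE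
          · rw [hE]; simp
          · rw [Zig.GE_inter_fail hmeas hindep hdist k tu.1 s tu.2,
              Zig.GE_card (le_of_lt hk) hE, pow_mul]
        rw [tsum_congr hterm, ENNReal.tsum_mul_right, Zig.GE_tsum hmeas k,
          Zig.goodset_full hp1 hmeas hindep hdist k (le_of_lt hk), one_mul]
      rw [tsum_congr hlev, ENNReal.tsum_geometric]
    have hae : (fun ω => ((zigzagStep n e ω n).1 : ℝ)) =ᵐ[μ]
        (fun ω => ((∑ k ∈ Finset.range n, Zig.gk e k ω : ℕ) : ℝ)) := by
      filter_upwards [hGae] with ω hG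
      have hnat : (zigzagStep n e ω n).1 = ∑ k ∈ Finset.range n, Zig.gk e k ω := by
        have hz : (zigzagStep n e ω n).1 = (Zig.D n (Zig.Vv e ω) n).1 := by
          rw [Zig.zig_eq]; rfl
        rw [hz, ← Zig.T_telescope hG n le_rfl]
        apply Finset.sum_congr rfl
        intro k hk
        rw [Zig.gk, if_pos hG]
      rw [hnat]
    rw [integral_congr_ae hae]
    have hmeasSum : Measurable (fun ω => (∑ k ∈ Finset.range n, Zig.gk e k ω : ℕ)) :=
      Finset.measurable_sum _ hgkmeas
    have hsm : AEStronglyMeasurable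
        (fun ω => ((∑ k ∈ Finset.range n, Zig.gk e k ω : ℕ) : ℝ)) μ :=
      Measurable.aestronglyMeasurable
        (show Measurable fun ω => ((∑ k ∈ Finset.range n, Zig.gk e k ω : ℕ) : ℝ) from
          measurable_from_top.comp hmeasSum)
    rw [integral_eq_lintegral_of_nonneg_ae
      (Filter.Eventually.of_forall (fun ω => Nat.cast_nonneg _)) hsm]
    have hof : ∀ ω, ENNReal.ofReal ((∑ k ∈ Finset.range n, Zig.gk e k ω : ℕ) : ℝ)
        = ((∑ k ∈ Finset.range n, Zig.gk e k ω : ℕ) : ℝ≥0∞) :=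
      fun ω => ENNReal.ofReal_natCast _
    rw [lintegral_congr hof]
    have hsum : ∫⁻ ω, ((∑ k ∈ Finset.range n, Zig.gk e k ω : ℕ) : ℝ≥0∞) ∂μ
        = ∑ k ∈ Finset.range n, (1 - ENNReal.ofReal p ^ (n - k))⁻¹ := by
      have hcast : ∀ ω, ((∑ k ∈ Finset.range n, Zig.gk e k ω : ℕ) : ℝ≥0∞)
          = ∑ k ∈ Finset.range n, ((Zig.gk e k ω : ℕ) : ℝ≥0∞) :=
        fun ω => Nat.cast_sum _ _
      rw [lintegral_congr hcast,
        lintegral_finset_sum _ (fun k hk =>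
          show Measurable fun ω => ((Zig.gk e k ω : ℕ) : ℝ≥0∞) from
            measurable_from_top.comp (hgkmeas k hk))]
      exact Finset.sum_congr rfl (fun k hk => hkey k (Finset.mem_range.mp hk))
    rw [hsum]
    have hfin : ∀ k ∈ Finset.range n, (1 - ENNReal.ofReal p ^ (n - k))⁻¹ ≠ ⊤ := by
      intro k hk
      rw [ENNReal.inv_ne_top]
      intro hzero
      rw [tsub_eq_zero_iff_le] at hzero
      exact absurd hzero (not_le.mpr (pow_lt_one₀ zero_le
        (ENNReal.ofReal_lt_one.mpr hp1)
        (by have := Finset.mem_range.mp hk; omega)))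
    rw [ENNReal.toReal_sum hfin]
    have hterm2 : ∀ k ∈ Finset.range n,
        ((1 - ENNReal.ofReal p ^ (n - k))⁻¹).toReal = 1 / (1 - p ^ (n - k)) := by
      intro k hk
      have h1 : ENNReal.ofReal p ^ (n - k) = ENNReal.ofReal (p ^ (n - k)) :=
        (ENNReal.ofReal_pow hp0.le _).symm
      have h2 : (1 : ℝ≥0∞) - ENNReal.ofReal (p ^ (n - k)) =
          ENNReal.ofReal (1 - p ^ (n - k)) := by
        rw [ENNReal.ofReal_sub 1 (by positivity), ENNReal.ofReal_one]
      rw [h1, h2, ENNReal.toReal_inv, ENNReal.toReal_ofReal (by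
        have hle1 : p ^ (n - k) ≤ 1 := pow_le_one₀ hp0.le hp1.le
        linarith), one_div]
    rw [Finset.sum_congr rfl hterm2]
    refine Finset.sum_nbij' (fun k => n - k) (fun m => n - m) ?_ ?_ ?_ ?_ ?_
    · intro a ha
      simp only [Finset.mem_range] at ha
      simp only [Finset.mem_Icc]
      omega
    · intro a ha
      simp only [Finset.mem_Icc] at ha
      simp only [Finset.mem_range]
      omega
    · intro a ha
      simp only [Finset.mem_range] at ha
      show n - (n - a) = a
      omega
    · intro a ha
      simp only [Finset.mem_Icc] at ha
      show n - (n - a) = a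
      omega
    · intro a _
      rfl
end

section
/- (Theorem 3, n + O(1) bound) For every real p with 0 < p < 1 and every natural number n ≥ 1, the ZigZag expected delivery time satisfies n ≤ Σ_{k=1}^{n} 1/(1 − p^k) ≤ n + p/(1 − p)^2. -/
/-- **Theorem 3, n + O(1) bound.** For every real `p` with `0 < p < 1` and every natural
number `n ≥ 1`, the ZigZag expected delivery time `∑_{k=1}^n 1/(1 - p^k)` satisfies
`n ≤ ∑_{k=1}^n 1/(1 - p^k) ≤ n + p/(1 - p)^2`. -/
theorem zigzag_delivery_time_n_plus_O1 (p : ℝ) (hp0 : 0 < p) (hp1 : p < 1)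
    (n : ℕ) (hn : 1 ≤ n) :
    (n : ℝ) ≤ ∑ k ∈ Finset.Icc 1 n, 1 / (1 - p ^ k) ∧
    ∑ k ∈ Finset.Icc 1 n, 1 / (1 - p ^ k) ≤ n + p / (1 - p) ^ 2 := by
  have h1p : 0 < 1 - p := by linarith
  have hpos : ∀ k ∈ Finset.Icc 1 n, 0 < 1 - p ^ k := by
    intro k hk
    have : p ^ k < 1 := pow_lt_one₀ hp0.le hp1 (by
      simp [Finset.mem_Icc] at hk; omega)
    linarith
  constructor
  · calc (n : ℝ) = ∑ k ∈ Finset.Icc 1 n, (1 : ℝ) := by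
          simp [Nat.card_Icc]
      _ ≤ ∑ k ∈ Finset.Icc 1 n, 1 / (1 - p ^ k) := by
          apply Finset.sum_le_sum
          intro k hk
          have hk' := hpos k hk
          have hle : 1 - p ^ k ≤ 1 := by
            have : 0 ≤ p ^ k := pow_nonneg hp0.le k
            linarith
          rw [le_div_iff₀ hk']
          linarith
  · have step : ∀ k ∈ Finset.Icc 1 n, 1 / (1 - p ^ k) ≤ 1 + p ^ k / (1 - p) := by
      intro k hk
      have hk' := hpos k hk
      rw [div_le_iff₀ hk']
      have hpk : 0 ≤ p ^ k := pow_nonneg hp0.le k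
      have hk1 : 1 ≤ k := by simp [Finset.mem_Icc] at hk; omega
      have hple : p ^ k ≤ p := by
        calc p ^ k ≤ p ^ 1 := pow_le_pow_of_le_one hp0.le hp1.le hk1
          _ = p := pow_one p
      have hq0 : 0 ≤ p ^ k / (1 - p) := div_nonneg hpk h1p.le
      have h3 : p ^ k / (1 - p) * (1 - p) = p ^ k := div_mul_cancel₀ _ (ne_of_gt h1p)
      nlinarith [mul_nonneg hq0 (sub_nonneg.2 hple), h3]
    have hgeo : ∑ k ∈ Finset.Icc 1 n, p ^ k ≤ p / (1 - p) := by
      have hrange : ∑ k ∈ Finset.range (n + 1), p ^ k = (1 - p ^ (n + 1)) / (1 - p) := by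
        rw [geom_sum_eq (ne_of_lt hp1)]
        rw [div_eq_div_iff (by linarith) (by linarith)]
        ring
      have hset : Finset.range (n + 1) = insert 0 (Finset.Icc 1 n) := by
        ext x; simp [Finset.mem_Icc, Nat.lt_succ_iff]; omega
      have hsplit : ∑ k ∈ Finset.range (n + 1), p ^ k
          = 1 + ∑ k ∈ Finset.Icc 1 n, p ^ k := by
        rw [hset, Finset.sum_insert (by simp)]; simp
      have h2 : (1 - p ^ (n + 1)) / (1 - p) ≤ 1 / (1 - p) := by
        have hnum : 1 - p ^ (n + 1) ≤ 1 := by nlinarith [pow_nonneg hp0.le (n + 1)]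
        exact div_le_div_of_nonneg_right hnum h1p.le |>.trans_eq rfl
      have h3 : (1 : ℝ) / (1 - p) = 1 + p / (1 - p) := by field_simp; ring
      have := hsplit.symm.trans hrange
      linarith
    calc ∑ k ∈ Finset.Icc 1 n, 1 / (1 - p ^ k)
        ≤ ∑ k ∈ Finset.Icc 1 n, (1 + p ^ k / (1 - p)) := Finset.sum_le_sum step
      _ = n + (∑ k ∈ Finset.Icc 1 n, p ^ k) / (1 - p) := by
          rw [Finset.sum_add_distrib, Finset.sum_div]
          simp [Nat.card_Icc]
      _ ≤ n + p / (1 - p) ^ 2 := by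
          have h4 : (∑ k ∈ Finset.Icc 1 n, p ^ k) / (1 - p) ≤ (p / (1 - p)) / (1 - p) := by
            apply div_le_div_of_nonneg_right hgeo h1p.le |>.trans_eq rfl
          calc (n : ℝ) + (∑ k ∈ Finset.Icc 1 n, p ^ k) / (1 - p)
              ≤ n + (p / (1 - p)) / (1 - p) := by linarith
            _ = n + p / (1 - p) ^ 2 := by rw [div_div, sq]
end

section
/- (Lemma, vertex inequalities) Let p ∈ (0,1), n ≥ 1, and let π be a permutation of {1,…,n}. Define the rate vector λ^π by λ^π_{π(i)} = (1−p) p^{i−1} for i = 1,…,n. Then for every nonempty subset S ⊆ {1,…,n}, Σ_{j∈S} λ^π_j ≤ 1 − p^{|S|}, and equality holds if and only if S = {π(1), …, π(k)} for some k with 1 ≤ k ≤ n. -/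
lemma geom_aux (p : ℝ) (hp0 : 0 < p) (hp1 : p < 1) (T : Finset ℕ) :
    (∑ i ∈ T, p ^ i) ≤ (∑ i ∈ Finset.range T.card, p ^ i) ∧
    ((∑ i ∈ T, p ^ i) = (∑ i ∈ Finset.range T.card, p ^ i) ↔
      T = Finset.range T.card) := by
  induction T using Finset.strongInduction with
  | _ T ih =>
    rcases T.eq_empty_or_nonempty with rfl | hT
    · simp
    · have hm : T.max' hT ∈ T := T.max'_mem hT
      set m := T.max' hT with hmdef
      have hss : T.erase m ⊂ T := Finset.erase_ssubset hm
      obtain ⟨ih1, ih2⟩ := ih (T.erase m) hss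
      have hcard : (T.erase m).card + 1 = T.card := Finset.card_erase_add_one hm
      have hsub : T ⊆ Finset.range (m + 1) := by
        intro x hx
        simp only [Finset.mem_range, Nat.lt_succ_iff]
        exact Finset.le_max' T x hx
      have hle : T.card ≤ m + 1 := by
        have := Finset.card_le_card hsub
        simpa using this
      have hmge : (T.erase m).card ≤ m := by omega
      have hpow : p ^ m ≤ p ^ (T.erase m).card :=
        pow_le_pow_of_le_one hp0.le hp1.le hmge
      have hsplit : (∑ i ∈ T.erase m, p ^ i) + p ^ m = ∑ i ∈ T, p ^ i :=
        Finset.sum_erase_add T _ hm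
      have hrsplit : (∑ i ∈ Finset.range T.card, p ^ i) =
          (∑ i ∈ Finset.range (T.erase m).card, p ^ i) + p ^ (T.erase m).card := by
        rw [← hcard, Finset.sum_range_succ]
      constructor
      · rw [← hsplit, hrsplit]; exact add_le_add ih1 hpow
      · constructor
        · intro heq
          rw [← hsplit, hrsplit] at heq
          have h1 : (∑ i ∈ T.erase m, p ^ i) = ∑ i ∈ Finset.range (T.erase m).card, p ^ i := by
            linarith
          have h2 : p ^ m = p ^ (T.erase m).card := by linarith
          have hmeq : m = (T.erase m).card := by
            by_contra hne
            have hlt : (T.erase m).card < m := lt_of_le_of_ne hmge (Ne.symm hne)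
            have := pow_lt_pow_right_of_lt_one₀ hp0 hp1 hlt
            linarith
          have hTE : T.erase m = Finset.range (T.erase m).card := ih2.mp h1
          have hins : T = Finset.range ((T.erase m).card + 1) := by
            rw [Finset.range_add_one, ← hTE, ← hmeq]
            exact (Finset.insert_erase hm).symm
          rw [← hcard]; exact hins
        · intro heq
          have hmval : m = T.card - 1 := by
            have hpos : 0 < T.card := Finset.card_pos.mpr hT
            have h1 : m < T.card := by
              have := hm; rw [heq] at this; simpa using this
            have h2 : T.card - 1 ≤ m := Finset.le_max' T _ (by rw [heq]; simpa using (by omega : T.card - 1 < T.card))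
            omega
          have hTE : T.erase m = Finset.range (T.card - 1) := by
            rw [heq, hmval]
            ext x
            simp [Finset.mem_erase, Finset.mem_range]
            omega
          have hc : (T.erase m).card = T.card - 1 := by omega
          rw [← hsplit, hrsplit, hc, hTE, hmval]

/-- **Lemma (vertex inequalities).** Let `p ∈ (0,1)`, `n ≥ 1`, and let `π` be a permutation
of the `n` senders. Define the rate vector `λ^π` by `λ^π_{π(i)} = (1-p) pⁱ` for
`i = 0, …, n-1` (zero-indexed). Then for every nonempty subset `S` of senders,
`∑_{j∈S} λ^π_j ≤ 1 - p^{|S|}`, with equality iff `S` is the set of the `k` highest-priority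
senders `{π(0), …, π(k-1)}` for some `1 ≤ k ≤ n`. -/
theorem vertex_inequalities (p : ℝ) (hp0 : 0 < p) (hp1 : p < 1)
    (n : ℕ) (hn : 1 ≤ n) (π : Equiv.Perm (Fin n)) (lam : Fin n → ℝ)
    (hlam : ∀ i : Fin n, lam (π i) = (1 - p) * p ^ (i : ℕ)) :
    ∀ S : Finset (Fin n), S.Nonempty →
      (∑ j ∈ S, lam j) ≤ 1 - p ^ S.card ∧
      ((∑ j ∈ S, lam j) = 1 - p ^ S.card ↔
        ∃ k : ℕ, 1 ≤ k ∧ k ≤ n ∧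
          S = Finset.univ.filter (fun j : Fin n => ((π.symm j : ℕ) < k))) := by
  intro S hS
  have h1p : (0:ℝ) < 1 - p := by linarith
  have hlam' : ∀ j : Fin n, lam j = (1 - p) * p ^ ((π.symm j : ℕ)) := by
    intro j
    have := hlam (π.symm j)
    simpa using this
  set f : Fin n → ℕ := fun j => (π.symm j : ℕ) with hf
  have hinj : Set.InjOn f S := by
    intro a _ b _ h
    exact π.symm.injective (Fin.val_injective h)
  set T : Finset ℕ := S.image f with hT
  have hcard : T.card = S.card := Finset.card_image_of_injOn hinj
  have hsum : (∑ j ∈ S, lam j) = (1 - p) * ∑ i ∈ T, p ^ i := by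
    rw [Finset.mul_sum, hT, Finset.sum_image (fun a ha b hb h => hinj ha hb h)]
    exact Finset.sum_congr rfl fun j _ => hlam' j
  have hgeom : ∀ k : ℕ, (1 - p) * (∑ i ∈ Finset.range k, p ^ i) = 1 - p ^ k := by
    intro k
    have := geom_sum_mul p k
    nlinarith [this]
  obtain ⟨key1, key2⟩ := geom_aux p hp0 hp1 T
  constructor
  · rw [hsum, ← hcard, ← hgeom]
    exact mul_le_mul_of_nonneg_left key1 h1p.le
  · rw [hsum, ← hcard, ← hgeom]
    constructor
    · intro heq
      have hAB : (∑ i ∈ T, p ^ i) = ∑ i ∈ Finset.range T.card, p ^ i :=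
        mul_left_cancel₀ (by linarith) heq
      have hTeq : T = Finset.range T.card := key2.mp hAB
      refine ⟨S.card, Finset.card_pos.mpr hS, ?_, ?_⟩
      · have := Finset.card_le_univ S
        simpa using this
      · ext j
        simp only [Finset.mem_filter, Finset.mem_univ, true_and]
        constructor
        · intro hj
          have : f j ∈ T := Finset.mem_image_of_mem f hj
          rw [hTeq, hcard] at this
          simpa using this
        · intro hj
          have : f j ∈ T := by
            rw [hTeq, hcard]
            simpa using hj
          obtain ⟨j', hj', hfe⟩ := Finset.mem_image.mp this
          have : j' = j := π.symm.injective (Fin.val_injective hfe)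
          rwa [← this]
    · rintro ⟨k, hk1, hkn, rfl⟩
      have hTrange : T = Finset.range k := by
        ext i
        simp only [hT, Finset.mem_image, Finset.mem_filter, Finset.mem_univ, true_and,
          Finset.mem_range]
        constructor
        · rintro ⟨j, hj, rfl⟩; exact hj
        · intro hi
          have hin : i < n := lt_of_lt_of_le hi hkn
          refine ⟨π ⟨i, hin⟩, ?_, ?_⟩ <;> simp [hf, hi]
      have hck : T.card = k := by rw [hTrange]; simp
      rw [hck] at key2 ⊢
      rw [hTrange]
end
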